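/- arXiv:2207.05089 — 8 statements merged into one kernel-verified Lean document; each statement's English description precedes it below -/
import Mathlib

section
/- Let n ≥ 1, let p ≥ 1, and let C be a real diagonal operator on the n-qubit Hilbert space with operator norm ‖C‖ ≤ n² (the diagonal entry of C at basis state z is the cost C(z)). Fix a threshold C₁ and let B_proj be the orthogonal projection onto the span of the computational basis states z with C(z) ≥ C₁, and let d₁ = Tr(B_proj) be the number of such states. Fix Δ ∈ (0,1). Call a string w ∈ {−1,1}ⁿ improvable if there exists a depth-p QAOA unitary U = e^{−iβ_p B}e^{−iγ_p C}···e^{−iβ_1 B}e^{−iγ_1 C} (for some parameters γ_1,…,γ_p, β_1,…,β_p ∈ [0,2π]) such that ⟨w|U†B_proj U|w⟩ > Δ. Then the number M of improvable strings satisfies M ≤ (2d₁/Δ)·(16πpn²/Δ)^{2p}. -/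
/-!
STATEMENT 0: Counting bound on the number of warm-start strings improvable by a
depth-p QAOA circuit (Theorem `thm:improvable` of the paper).
-/

open scoped Matrix Real

/-- The type of `n`-bit strings, identified with `{-1,1}ⁿ` via `sgn`. -/
abbrev Str (n : ℕ) := Fin n → Bool

/-- The `±1` value of a bit. -/
noncomputable def sgn (b : Bool) : ℝ := if b then 1 else -1

/-- Matrices on the `n`-qubit Hilbert space `ℂ^(2^n)`, with computational basis
indexed by strings. -/
abbrev Mat (n : ℕ) := Matrix (Str n) (Str n) ℂ

/-- The Pauli `Z` operator on qubit `i`: diagonal with entry `z i`. -/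
noncomputable def PauliZ (n : ℕ) (i : Fin n) : Mat n :=
  Matrix.diagonal fun z => (sgn (z i) : ℂ)

/-- The Pauli `X` operator on qubit `i`: flips bit `i`. -/
noncomputable def PauliX (n : ℕ) (i : Fin n) : Mat n :=
  Matrix.of fun z z' => if z' = Function.update z i (!z i) then 1 else 0

/-- The mixing operator `B = Σᵢ Xᵢ`. -/
noncomputable def mixer (n : ℕ) : Mat n := ∑ i, PauliX n i

/-- Matrix exponential. -/
noncomputable def mexp {ι : Type*} [Fintype ι] [DecidableEq ι] (A : Matrix ι ι ℂ) : Matrix ι ι ℂ :=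
  NormedSpace.exp A

/-- The `ℓ²` operator norm of a matrix acting on the associated Euclidean space. -/
noncomputable def opNorm {ι : Type*} [Fintype ι] [DecidableEq ι] (A : Matrix ι ι ℂ) : ℝ :=
  ‖Matrix.toEuclideanCLM (𝕜 := ℂ) A‖

/-- The depth-`p` QAOA unitary
`U = e^{−iβ_p B} e^{−iγ_p C} ⋯ e^{−iβ_1 B} e^{−iγ_1 C}`
(layer `p` is the leftmost factor). -/
noncomputable def qaoaU (n : ℕ) (Cm : Mat n) (p : ℕ) (γ β : Fin p → ℝ) : Mat n :=
  (List.ofFn fun k : Fin p =>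
    mexp ((-(Complex.I * (β k.rev))) • mixer n) * mexp ((-(Complex.I * (γ k.rev))) • Cm)).prod

open scoped Matrix.Norms.L2Operator
open NormedSpace Complex

namespace QA
variable {n : ℕ}

lemma mexp_eq (A : Mat n) : mexp A = exp A := rfl
lemma opNorm_eq (A : Mat n) : opNorm A = ‖A‖ := rfl

/-- conjTranspose of the exponential factor. -/
lemma mexp_star (A : Mat n) (hA : Aᴴ = A) (t : ℝ) :
    (mexp ((-(Complex.I * t)) • A))ᴴ = mexp ((Complex.I * t) • A) := by
  rw [mexp_eq, mexp_eq, ← Matrix.exp_conjTranspose]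
  congr 1
  rw [Matrix.conjTranspose_smul, hA]
  congr 1
  simp [Complex.ext_iff]

lemma mexp_mul_inv (A : Mat n) (t : ℝ) :
    mexp ((-(Complex.I * t)) • A) * mexp ((Complex.I * t) • A) = 1 := by
  have h : exp ((-(Complex.I * t)) • A) * exp ((Complex.I * t) • A) = 1 := by
    rw [← Matrix.exp_add_of_commute _ _ (by
      apply Commute.smul_left; apply Commute.smul_right; exact Commute.refl A)]
    rw [← add_smul]
    simp [NormedSpace.exp_zero]
  exact h

lemma mexp_unitary (A : Mat n) (hA : Aᴴ = A) (t : ℝ) :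
    mexp ((-(Complex.I * t)) • A) ∈ unitary (Mat n) := by
  constructor
  · rw [Matrix.star_eq_conjTranspose, mexp_star A hA t]
    have h := mexp_mul_inv A (-t)
    have : (-(Complex.I * (-t:ℝ))) = Complex.I * t := by push_cast; ring
    rw [this] at h
    have h2 : ((Complex.I * ((-t:ℝ)):ℂ)) = -(Complex.I * t) := by push_cast; ring
    rw [h2] at h
    exact h
  · rw [Matrix.star_eq_conjTranspose, mexp_star A hA t]
    exact mexp_mul_inv A t

lemma norm_one_mat : ‖(1 : Mat n)‖ = 1 := by
  rw [Matrix.cstar_norm_def, map_one]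
  exact ContinuousLinearMap.norm_id

lemma norm_unitary {U : Mat n} (hU : U ∈ unitary (Mat n)) : ‖U‖ = 1 := by
  have h := CStarRing.norm_star_mul_self (x := U)
  rw [hU.1, norm_one_mat] at h
  nlinarith [norm_nonneg U]

/-- Lipschitz bound for the exponential factor. -/
lemma mexp_lipschitz (A : Mat n) (hA : Aᴴ = A) (s t : ℝ) :
    ‖mexp ((-(Complex.I * s)) • A) - mexp ((-(Complex.I * t)) • A)‖ ≤ ‖A‖ * |s - t| := by
  set b : Mat n := (-Complex.I) • A with hb
  have key : ∀ r : ℝ, r • b = (-(Complex.I * r)) • A := by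
    intro r
    have h1 : (r : ℝ) • b = ((r : ℂ)) • b := by
      ext i j
      simp [Matrix.smul_apply, Complex.real_smul]
    rw [h1, hb, smul_smul]
    congr 1
    push_cast
    ring
  have hexp : ∀ r : ℝ, exp (r • b) = mexp ((-(Complex.I * r)) • A) := by
    intro r
    rw [key, mexp_eq]
  have hder : ∀ r : ℝ, HasDerivAt (fun u : ℝ => exp (u • b)) (exp (r • b) * b) r :=
    fun r => hasDerivAt_exp_smul_const b r
  have hbound : ∀ r : ℝ, ‖exp (r • b) * b‖ ≤ ‖A‖ := by
    intro r
    calc ‖exp (r • b) * b‖ ≤ ‖exp (r • b)‖ * ‖b‖ := norm_mul_le _ _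
    _ ≤ 1 * ‖A‖ := by
        apply mul_le_mul _ _ (norm_nonneg _) zero_le_one
        · rw [hexp r]
          exact le_of_eq (norm_unitary (mexp_unitary A hA r))
        · rw [hb, norm_smul]
          simp
    _ = ‖A‖ := one_mul _
  have := Convex.norm_image_sub_le_of_norm_hasDerivWithin_le
    (f := fun u : ℝ => exp (u • b)) (f' := fun r => exp (r • b) * b)
    (C := ‖A‖) (s := Set.univ)
    (fun r _ => (hder r).hasDerivWithinAt) (fun r _ => hbound r)
    convex_univ (Set.mem_univ t) (Set.mem_univ s)
  rw [hexp s, hexp t] at this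
  simpa [Real.norm_eq_abs] using this

/-- norm ≤ 1 for products. -/
lemma norm_ofFn_prod_le_one {m : ℕ} (f : Fin m → Mat n) (hf : ∀ k, ‖f k‖ ≤ 1) :
    ‖(List.ofFn f).prod‖ ≤ 1 := by
  induction m with
  | zero => simp [norm_one_mat]
  | succ m ih =>
      rw [List.ofFn_succ, List.prod_cons]
      calc ‖f 0 * (List.ofFn fun i => f i.succ).prod‖
          ≤ ‖f 0‖ * ‖(List.ofFn fun i => f i.succ).prod‖ := norm_mul_le _ _
        _ ≤ 1 * 1 := mul_le_mul (hf 0) (ih _ fun k => hf k.succ)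
            (norm_nonneg _) zero_le_one
        _ = 1 := one_mul _

/-- telescoping bound. -/
lemma prod_sub_prod_le {m : ℕ} (f g : Fin m → Mat n) (hf : ∀ k, ‖f k‖ ≤ 1)
    (hg : ∀ k, ‖g k‖ ≤ 1) :
    ‖(List.ofFn f).prod - (List.ofFn g).prod‖ ≤ ∑ k, ‖f k - g k‖ := by
  induction m with
  | zero => simp
  | succ m ih =>
      rw [List.ofFn_succ, List.ofFn_succ, List.prod_cons, List.prod_cons]
      set P := (List.ofFn fun i => f i.succ).prod
      set Q := (List.ofFn fun i => g i.succ).prod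
      have hPQ : ‖P - Q‖ ≤ ∑ k : Fin m, ‖f k.succ - g k.succ‖ :=
        ih _ _ (fun k => hf k.succ) (fun k => hg k.succ)
      have hsplit : f 0 * P - g 0 * Q = f 0 * (P - Q) + (f 0 - g 0) * Q := by
        noncomm_ring
      rw [hsplit, Fin.sum_univ_succ]
      have h1 : ‖f 0 * (P - Q)‖ ≤ ‖P - Q‖ := by
        calc ‖f 0 * (P - Q)‖ ≤ ‖f 0‖ * ‖P - Q‖ := norm_mul_le _ _
        _ ≤ 1 * ‖P - Q‖ := mul_le_mul_of_nonneg_right (hf 0) (norm_nonneg _)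
        _ = ‖P - Q‖ := one_mul _
      have h2 : ‖(f 0 - g 0) * Q‖ ≤ ‖f 0 - g 0‖ := by
        calc ‖(f 0 - g 0) * Q‖ ≤ ‖f 0 - g 0‖ * ‖Q‖ := norm_mul_le _ _
        _ ≤ ‖f 0 - g 0‖ * 1 := mul_le_mul_of_nonneg_left
            (norm_ofFn_prod_le_one _ fun k => hg k.succ) (norm_nonneg _)
        _ = ‖f 0 - g 0‖ := mul_one _
      calc ‖f 0 * (P - Q) + (f 0 - g 0) * Q‖
          ≤ ‖f 0 * (P - Q)‖ + ‖(f 0 - g 0) * Q‖ := norm_add_le _ _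
        _ ≤ ‖P - Q‖ + ‖f 0 - g 0‖ := add_le_add h1 h2
        _ ≤ (∑ k : Fin m, ‖f k.succ - g k.succ‖) + ‖f 0 - g 0‖ :=
            add_le_add hPQ (le_refl _)
        _ = ‖f 0 - g 0‖ + ∑ k : Fin m, ‖f k.succ - g k.succ‖ := add_comm _ _


/-- Involutivity of bit flip. -/
lemma flip_iff (z z' : Str n) (i : Fin n) :
    z' = Function.update z i (!z i) ↔ z = Function.update z' i (!z' i) := by
  constructor <;> rintro rfl <;> simp [Function.update_idem]

lemma pauliX_sa (i : Fin n) : (PauliX n i)ᴴ = PauliX n i := by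
  ext z z'
  simp only [PauliX, Matrix.conjTranspose_apply, Matrix.of_apply]
  by_cases h : z = Function.update z' i (!z' i)
  · rw [if_pos h, if_pos ((flip_iff z z' i).mpr h)]
    simp
  · rw [if_neg h, if_neg (fun hc => h ((flip_iff z z' i).mp hc))]
    simp

lemma pauliX_mul_self (i : Fin n) : PauliX n i * PauliX n i = 1 := by
  ext z z'
  simp only [Matrix.mul_apply, PauliX, Matrix.of_apply, Matrix.one_apply, ite_mul, one_mul,
    zero_mul]
  rw [Finset.sum_ite_eq' Finset.univ (Function.update z i (!z i))
    (fun y => if z' = Function.update y i (!y i) then (1:ℂ) else 0)]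
  simp [Function.update_idem, eq_comm]

lemma pauliX_unitary (i : Fin n) : PauliX n i ∈ unitary (Mat n) := by
  constructor <;>
    rw [Matrix.star_eq_conjTranspose, pauliX_sa] <;> exact pauliX_mul_self i

lemma mixer_sa : (mixer n)ᴴ = mixer n := by
  unfold mixer
  rw [Matrix.conjTranspose_sum]
  exact Finset.sum_congr rfl fun i _ => pauliX_sa i

lemma norm_mixer_le : ‖mixer n‖ ≤ (n : ℝ) := by
  unfold mixer
  calc ‖∑ i, PauliX n i‖ ≤ ∑ i : Fin n, ‖PauliX n i‖ := norm_sum_le _ _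
  _ = ∑ _i : Fin n, (1:ℝ) := Finset.sum_congr rfl fun i _ => norm_unitary (pauliX_unitary i)
  _ = n := by simp

/-- entry bounded by op norm -/
lemma entry_le_norm (A : Mat n) (w : Str n) : ‖A w w‖ ≤ ‖A‖ := by
  classical
  set x : EuclideanSpace ℂ (Str n) := EuclideanSpace.single w 1 with hx
  have hxnorm : ‖x‖ = 1 := by simp [hx, EuclideanSpace.norm_single]
  set y : EuclideanSpace ℂ (Str n) := (EuclideanSpace.equiv (Str n) ℂ).symm (A *ᵥ x) with hy
  have hynorm : ‖y‖ ≤ ‖A‖ := by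
    have h := Matrix.l2_opNorm_mulVec A x
    rw [hxnorm, mul_one] at h
    exact h
  have hyw : y w = A w w := by
    simp only [hy, hx, EuclideanSpace.equiv, WithLp.linearEquiv_symm_apply]
    show (A *ᵥ x) w = A w w
    have : ∀ z, x z = if z = w then 1 else 0 := by
      intro z; simp [hx, EuclideanSpace.single_apply]
    simp only [Matrix.mulVec, dotProduct, this, mul_ite, mul_one, mul_zero]
    simp
  have hinner : (inner ℂ x y : ℂ) = y w := by
    rw [hx, EuclideanSpace.inner_single_left]
    simp
  calc ‖A w w‖ = ‖(inner ℂ x y : ℂ)‖ := by rw [hinner, hyw]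
  _ ≤ ‖x‖ * ‖y‖ := norm_inner_le_norm _ _
  _ ≤ ‖A‖ := by rw [hxnorm, one_mul]; exact hynorm

/-- Lipschitz continuity of the diagonal entry of `Uᴴ P U` in `U`. -/
lemma entry_diff (P U V : Mat n) (hP : ‖P‖ ≤ 1) (hU : ‖U‖ ≤ 1) (hV : ‖V‖ ≤ 1) (w : Str n) :
    |((Uᴴ * P * U) w w).re - ((Vᴴ * P * V) w w).re| ≤ 2 * ‖U - V‖ := by
  have hsplit : Uᴴ * P * U - Vᴴ * P * V = Uᴴ * P * (U - V) + ((U - V)ᴴ * (P * V)) := by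
    rw [Matrix.conjTranspose_sub]
    noncomm_ring
  have h1 : ‖Uᴴ * P * (U - V)‖ ≤ ‖U - V‖ := by
    calc ‖Uᴴ * P * (U - V)‖ ≤ ‖Uᴴ * P‖ * ‖U - V‖ := norm_mul_le _ _
    _ ≤ 1 * ‖U - V‖ := by
        apply mul_le_mul_of_nonneg_right _ (norm_nonneg _)
        calc ‖Uᴴ * P‖ ≤ ‖Uᴴ‖ * ‖P‖ := norm_mul_le _ _
        _ ≤ 1 * 1 := by
            apply mul_le_mul _ hP (norm_nonneg _) zero_le_one
            rw [Matrix.l2_opNorm_conjTranspose]; exact hU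
        _ = 1 := one_mul _
    _ = ‖U - V‖ := one_mul _
  have h2 : ‖(U - V)ᴴ * (P * V)‖ ≤ ‖U - V‖ := by
    calc ‖(U - V)ᴴ * (P * V)‖ ≤ ‖(U - V)ᴴ‖ * ‖P * V‖ := norm_mul_le _ _
    _ ≤ ‖U - V‖ * 1 := by
        apply mul_le_mul
        · rw [Matrix.l2_opNorm_conjTranspose]
        · calc ‖P * V‖ ≤ ‖P‖ * ‖V‖ := norm_mul_le _ _
          _ ≤ 1 * 1 := mul_le_mul hP hV (norm_nonneg _) zero_le_one
          _ = 1 := one_mul _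
        · exact norm_nonneg _
        · exact norm_nonneg _
    _ = ‖U - V‖ := mul_one _
  have hentry : ((Uᴴ * P * U) w w).re - ((Vᴴ * P * V) w w).re
      = ((Uᴴ * P * U - Vᴴ * P * V) w w).re := by
    simp [Matrix.sub_apply]
  rw [hentry]
  calc |((Uᴴ * P * U - Vᴴ * P * V) w w).re| ≤ ‖(Uᴴ * P * U - Vᴴ * P * V) w w‖ := by
        exact Complex.abs_re_le_norm _
  _ ≤ ‖Uᴴ * P * U - Vᴴ * P * V‖ := entry_le_norm _ w
  _ = ‖Uᴴ * P * (U - V) + ((U - V)ᴴ * (P * V))‖ := by rw [hsplit]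
  _ ≤ ‖Uᴴ * P * (U - V)‖ + ‖(U - V)ᴴ * (P * V)‖ := norm_add_le _ _
  _ ≤ ‖U - V‖ + ‖U - V‖ := add_le_add h1 h2
  _ = 2 * ‖U - V‖ := by ring

lemma proj_norm_le_one (c : Str n → ℝ) (C₁ : ℝ) :
    ‖(Matrix.diagonal fun z => if C₁ ≤ c z then (1:ℂ) else 0 : Mat n)‖ ≤ 1 := by
  classical
  set P : Mat n := Matrix.diagonal fun z => if C₁ ≤ c z then (1:ℂ) else 0 with hP
  have hfun1 : (star fun z : Str n => if C₁ ≤ c z then (1:ℂ) else 0)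
      = fun z : Str n => if C₁ ≤ c z then (1:ℂ) else 0 := by
    funext z
    simp only [Pi.star_apply]
    split_ifs <;> simp
  have hfun2 : (fun z : Str n => (if C₁ ≤ c z then (1:ℂ) else 0) * if C₁ ≤ c z then (1:ℂ) else 0)
      = fun z : Str n => if C₁ ≤ c z then (1:ℂ) else 0 := by
    funext z
    split_ifs <;> simp
  have hPsa : star P = P := by
    rw [Matrix.star_eq_conjTranspose, hP, Matrix.diagonal_conjTranspose, hfun1]
  have hPP : P * P = P := by
    rw [hP, Matrix.diagonal_mul_diagonal, hfun2]
  have h := CStarRing.norm_star_mul_self (x := P)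
  rw [hPsa, hPP] at h
  nlinarith [norm_nonneg P]

/-- Markov/trace counting bound for a fixed unitary. -/
lemma markov_count (U : Mat n) (hU : U * Uᴴ = 1) (c : Str n → ℝ) (C₁ : ℝ) {Δ : ℝ}
    (hΔ : 0 < Δ) [DecidablePred fun z => C₁ ≤ c z] :
    ((Finset.univ.filter fun w : Str n =>
        Δ/2 < (((Uᴴ * (Matrix.diagonal fun z => if C₁ ≤ c z then (1:ℂ) else 0) * U)) w w).re).card : ℝ)
      ≤ 2 * (Finset.univ.filter fun z : Str n => C₁ ≤ c z).card / Δ := by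
  classical
  set P : Mat n := Matrix.diagonal fun z => if C₁ ≤ c z then (1:ℂ) else 0 with hP
  set E : Str n → ℝ := fun w => ((Uᴴ * P * U) w w).re with hE
  have hentry : ∀ w, E w = ∑ z : Str n, (if C₁ ≤ c z then Complex.normSq (U z w) else 0) := by
    intro w
    show ((Uᴴ * P * U) w w).re = _
    have h1 : (Uᴴ * P * U) w w = ∑ z, (Uᴴ * P) w z * U z w := Matrix.mul_apply
    have h2 : ∀ z, (Uᴴ * P) w z = (starRingEnd ℂ) (U z w) * (if C₁ ≤ c z then (1:ℂ) else 0) := by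
      intro z
      rw [hP, Matrix.mul_diagonal, Matrix.conjTranspose_apply]
      rfl
    rw [h1]
    simp only [h2]
    rw [Complex.re_sum]
    refine Finset.sum_congr rfl fun z _ => ?_
    split_ifs with h
    · rw [mul_one, Complex.normSq_apply]
      simp only [Complex.mul_re, Complex.conj_re, Complex.conj_im]
      ring
    · simp
  have hnonneg : ∀ w, 0 ≤ E w := by
    intro w
    rw [hentry w]
    apply Finset.sum_nonneg
    intro z _
    split_ifs
    · exact Complex.normSq_nonneg _
    · exact le_refl 0
  have hrow : ∀ z, ∑ w, Complex.normSq (U z w) = 1 := by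
    intro z
    have h1 : (U * Uᴴ) z z = ∑ w, ((Complex.normSq (U z w) : ℝ) : ℂ) := by
      rw [Matrix.mul_apply]
      refine Finset.sum_congr rfl fun w _ => ?_
      rw [Matrix.conjTranspose_apply]
      rw [← Complex.mul_conj]
      rfl
    rw [hU, Matrix.one_apply_eq] at h1
    have h2 := congrArg Complex.re h1
    rw [Complex.re_sum] at h2
    simpa using h2.symm
  have hsum : ∑ w, E w = ((Finset.univ.filter fun z : Str n => C₁ ≤ c z).card : ℝ) := by
    calc ∑ w, E w = ∑ w, ∑ z : Str n, (if C₁ ≤ c z then Complex.normSq (U z w) else 0) :=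
          Finset.sum_congr rfl fun w _ => hentry w
    _ = ∑ z : Str n, ∑ w, (if C₁ ≤ c z then Complex.normSq (U z w) else 0) := Finset.sum_comm
    _ = ∑ z : Str n, (if C₁ ≤ c z then (1:ℝ) else 0) := by
        refine Finset.sum_congr rfl fun z _ => ?_
        by_cases h : C₁ ≤ c z
        · simp [h, hrow z]
        · simp [h]
    _ = ((Finset.univ.filter fun z : Str n => C₁ ≤ c z).card : ℝ) := by
        rw [Finset.sum_boole]
  set T := Finset.univ.filter fun w : Str n => Δ/2 < ((Uᴴ * P * U) w w).re with hT
  have hTcard : (T.card : ℝ) * (Δ/2) ≤ ∑ w, E w := by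
    calc (T.card : ℝ) * (Δ/2) = ∑ _w ∈ T, (Δ/2) := by rw [Finset.sum_const]; simp [mul_comm]
    _ ≤ ∑ w ∈ T, E w := by
        refine Finset.sum_le_sum fun w hw => ?_
        rw [hT] at hw
        exact le_of_lt (Finset.mem_filter.mp hw).2
    _ ≤ ∑ w, E w := Finset.sum_le_sum_of_subset_of_nonneg (Finset.filter_subset _ _)
        (fun w _ _ => hnonneg w)
  rw [hsum] at hTcard
  rw [le_div_iff₀ hΔ]
  linarith

lemma qaoaU_unitary (Cm : Mat n) (hC : Cmᴴ = Cm) (p : ℕ) (γ β : Fin p → ℝ) :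
    qaoaU n Cm p γ β ∈ unitary (Mat n) := by
  unfold qaoaU
  apply list_prod_mem
  intro x hx
  rw [List.mem_ofFn] at hx
  obtain ⟨k, rfl⟩ := hx
  exact mul_mem (mexp_unitary (mixer n) mixer_sa _) (mexp_unitary Cm hC _)

lemma norm_qaoaU (Cm : Mat n) (hC : Cmᴴ = Cm) (p : ℕ) (γ β : Fin p → ℝ) :
    ‖qaoaU n Cm p γ β‖ = 1 := norm_unitary (qaoaU_unitary Cm hC p γ β)

lemma qaoaU_mul_star (Cm : Mat n) (hC : Cmᴴ = Cm) (p : ℕ) (γ β : Fin p → ℝ) :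
    qaoaU n Cm p γ β * (qaoaU n Cm p γ β)ᴴ = 1 := by
  rw [← Matrix.star_eq_conjTranspose]
  exact (qaoaU_unitary Cm hC p γ β).2

lemma qaoaU_diff (Cm : Mat n) (hC : Cmᴴ = Cm) (hCn : ‖Cm‖ ≤ (n:ℝ)^2) (hn : 1 ≤ n)
    (p : ℕ) (γ β γ' β' : Fin p → ℝ) {ε : ℝ} (hε : 0 ≤ ε)
    (hγ : ∀ k, |γ k - γ' k| ≤ ε) (hβ : ∀ k, |β k - β' k| ≤ ε) :
    ‖qaoaU n Cm p γ β - qaoaU n Cm p γ' β'‖ ≤ p * (2 * (n:ℝ)^2 * ε) := by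
  have hnn : (n:ℝ) ≤ (n:ℝ)^2 := by
    have h1 : (1:ℝ) ≤ n := by exact_mod_cast hn
    nlinarith
  have key : ∀ k : Fin p,
      ‖(mexp ((-(Complex.I * (β k.rev))) • mixer n) * mexp ((-(Complex.I * (γ k.rev))) • Cm))
        - (mexp ((-(Complex.I * (β' k.rev))) • mixer n) * mexp ((-(Complex.I * (γ' k.rev))) • Cm))‖
      ≤ 2 * (n:ℝ)^2 * ε := by
    intro k
    set a := mexp ((-(Complex.I * (β k.rev))) • mixer n)
    set b := mexp ((-(Complex.I * (γ k.rev))) • Cm)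
    set a' := mexp ((-(Complex.I * (β' k.rev))) • mixer n)
    set b' := mexp ((-(Complex.I * (γ' k.rev))) • Cm)
    have hsplit : a * b - a' * b' = (a - a') * b + a' * (b - b') := by noncomm_ring
    have h1 : ‖(a - a') * b‖ ≤ (n:ℝ) * ε := by
      calc ‖(a - a') * b‖ ≤ ‖a - a'‖ * ‖b‖ := norm_mul_le _ _
      _ ≤ ((n:ℝ) * ε) * 1 := by
          apply mul_le_mul _ (le_of_eq (norm_unitary (mexp_unitary Cm hC _))) (norm_nonneg _)
            (by positivity)
          calc ‖a - a'‖ ≤ ‖mixer n‖ * |β k.rev - β' k.rev| :=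
                mexp_lipschitz (mixer n) mixer_sa _ _
          _ ≤ (n:ℝ) * ε := mul_le_mul norm_mixer_le (hβ k.rev) (abs_nonneg _)
              (Nat.cast_nonneg n)
      _ = (n:ℝ) * ε := mul_one _
    have h2 : ‖a' * (b - b')‖ ≤ (n:ℝ)^2 * ε := by
      calc ‖a' * (b - b')‖ ≤ ‖a'‖ * ‖b - b'‖ := norm_mul_le _ _
      _ ≤ 1 * ((n:ℝ)^2 * ε) := by
          apply mul_le_mul (le_of_eq (norm_unitary (mexp_unitary (mixer n) mixer_sa _)))
            _ (norm_nonneg _) zero_le_one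
          calc ‖b - b'‖ ≤ ‖Cm‖ * |γ k.rev - γ' k.rev| := mexp_lipschitz Cm hC _ _
          _ ≤ (n:ℝ)^2 * ε := mul_le_mul hCn (hγ k.rev) (abs_nonneg _) (by positivity)
      _ = (n:ℝ)^2 * ε := one_mul _
    calc ‖a * b - a' * b'‖ = ‖(a - a') * b + a' * (b - b')‖ := by rw [hsplit]
    _ ≤ ‖(a - a') * b‖ + ‖a' * (b - b')‖ := norm_add_le _ _
    _ ≤ (n:ℝ) * ε + (n:ℝ)^2 * ε := add_le_add h1 h2
    _ ≤ 2 * (n:ℝ)^2 * ε := by nlinarith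
  have hf1 : ∀ k : Fin p,
      ‖mexp ((-(Complex.I * (β k.rev))) • mixer n) * mexp ((-(Complex.I * (γ k.rev))) • Cm)‖ ≤ 1 :=
    fun k => le_of_eq (norm_unitary (mul_mem (mexp_unitary (mixer n) mixer_sa _)
      (mexp_unitary Cm hC _)))
  have hf2 : ∀ k : Fin p,
      ‖mexp ((-(Complex.I * (β' k.rev))) • mixer n) * mexp ((-(Complex.I * (γ' k.rev))) • Cm)‖ ≤ 1 :=
    fun k => le_of_eq (norm_unitary (mul_mem (mexp_unitary (mixer n) mixer_sa _)
      (mexp_unitary Cm hC _)))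
  calc ‖qaoaU n Cm p γ β - qaoaU n Cm p γ' β'‖
      ≤ ∑ k : Fin p, ‖(mexp ((-(Complex.I * (β k.rev))) • mixer n)
          * mexp ((-(Complex.I * (γ k.rev))) • Cm))
        - (mexp ((-(Complex.I * (β' k.rev))) • mixer n)
          * mexp ((-(Complex.I * (γ' k.rev))) • Cm))‖ := prod_sub_prod_le _ _ hf1 hf2
  _ ≤ ∑ _k : Fin p, 2 * (n:ℝ)^2 * ε := Finset.sum_le_sum fun k _ => key k
  _ = p * (2 * (n:ℝ)^2 * ε) := by rw [Finset.sum_const]; simp [mul_comm]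

/-- covering the interval [0, 2π] by K grid points with mesh π/K. -/
lemma near_exists {K : ℕ} (hK : 0 < K) {θ : ℝ} (hθ : θ ∈ Set.Icc 0 (2*π)) :
    ∃ j : Fin K, |θ - (2*(j:ℝ)+1)*π/K| ≤ π/K := by
  obtain ⟨hθ0, hθ2⟩ := hθ
  have hπ : 0 < π := Real.pi_pos
  have hKR : (0:ℝ) < K := by exact_mod_cast hK
  set x : ℝ := θ * K / (2*π) with hx
  have hx0 : 0 ≤ x := by positivity
  set j0 : ℕ := min ⌊x⌋₊ (K-1) with hj0
  have hj0K : j0 < K := by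
    have : K - 1 < K := Nat.sub_lt hK one_pos
    exact lt_of_le_of_lt (min_le_right _ _) this
  refine ⟨⟨j0, hj0K⟩, ?_⟩
  have hlow : 2*π*j0/K ≤ θ := by
    have h1 : (j0:ℝ) ≤ x := le_trans (by exact_mod_cast min_le_left ⌊x⌋₊ (K-1)) (Nat.floor_le hx0)
    rw [hx, le_div_iff₀ (by positivity : (0:ℝ) < 2*π)] at h1
    rw [div_le_iff₀ hKR]
    nlinarith
  have hup : θ ≤ 2*π*(j0+1)/K := by
    by_cases hc : ⌊x⌋₊ ≤ K - 1
    · have hj0eq : j0 = ⌊x⌋₊ := min_eq_left hc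
      have h1 : x < j0 + 1 := by rw [hj0eq]; exact Nat.lt_floor_add_one x
      rw [hx, div_lt_iff₀ (by positivity : (0:ℝ) < 2*π)] at h1
      rw [le_div_iff₀ hKR]
      nlinarith
    · push_neg at hc
      have hj0eq : j0 = K - 1 := min_eq_right (le_of_lt hc)
      have hKsub : ((K:ℝ) - 1) + 1 = K := by ring
      have hj0cast : (j0:ℝ) = (K:ℝ) - 1 := by
        rw [hj0eq]
        have : ((K-1:ℕ):ℝ) = (K:ℝ) - 1 := by
          rw [Nat.cast_sub hK]
          simp
        rw [this]
      rw [hj0cast, hKsub]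
      rw [le_div_iff₀ hKR]
      nlinarith
  have e1 : (2*(j0:ℝ)+1)*π/K - π/K = 2*π*j0/K := by ring
  have e2 : (2*(j0:ℝ)+1)*π/K + π/K = 2*π*(j0+1)/K := by ring
  rw [abs_le]
  constructor
  · simp only []
    linarith [e1]
  · simp only []
    linarith [e2]

end QA

theorem stmt0 (n p : ℕ) (hn : 1 ≤ n) (hp : 1 ≤ p)
    (c : Str n → ℝ)
    -- `C` is the real diagonal cost operator, with operator norm at most `n²`
    (Cm : Mat n) (hCm : Cm = Matrix.diagonal fun z => (c z : ℂ))
    (hCnorm : opNorm Cm ≤ (n : ℝ) ^ 2)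
    (C₁ : ℝ)
    -- `B_proj` is the projection onto basis states of cost at least `C₁`
    (Bproj : Mat n) (hBproj : Bproj = Matrix.diagonal fun z => if C₁ ≤ c z then (1 : ℂ) else 0)
    -- `d₁ = Tr B_proj` is the number of such states
    (d₁ : ℕ) (hd₁ : d₁ = {z : Str n | C₁ ≤ c z}.ncard)
    (Δ : ℝ) (hΔ : Δ ∈ Set.Ioo (0 : ℝ) 1)
    -- `M` is the number of improvable strings
    (M : ℕ)
    (hM : M = {w : Str n | ∃ γ β : Fin p → ℝ,
        (∀ k, γ k ∈ Set.Icc 0 (2 * π)) ∧ (∀ k, β k ∈ Set.Icc 0 (2 * π)) ∧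
        Δ < (((qaoaU n Cm p γ β)ᴴ * Bproj * qaoaU n Cm p γ β) w w).re}.ncard) :
    (M : ℝ) ≤ (2 * d₁ / Δ) * (16 * π * p * (n : ℝ) ^ 2 / Δ) ^ (2 * p) := by
  classical
  subst hCm hBproj hd₁ hM
  obtain ⟨hΔ0, hΔ1⟩ := hΔ
  have hπ : 0 < π := Real.pi_pos
  have hπ3 : 3 < π := Real.pi_gt_three
  have hp1 : (1:ℝ) ≤ p := by exact_mod_cast hp
  have hn1 : (1:ℝ) ≤ n := by exact_mod_cast hn
  set Cm : Mat n := Matrix.diagonal fun z => (c z : ℂ) with hCm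
  set P : Mat n := Matrix.diagonal fun z => if C₁ ≤ c z then (1:ℂ) else 0 with hP
  have hCsa : Cmᴴ = Cm := by
    have h1 : (star fun z : Str n => (c z : ℂ)) = fun z : Str n => (c z : ℂ) := by
      funext z
      simp [Complex.conj_ofReal]
    rw [hCm, Matrix.diagonal_conjTranspose, h1]
  have hCn : ‖Cm‖ ≤ (n:ℝ)^2 := by rw [← QA.opNorm_eq]; exact hCnorm
  have hd₁' : ({z : Str n | C₁ ≤ c z}.ncard : ℝ)
      = ((Finset.univ.filter fun z : Str n => C₁ ≤ c z).card : ℝ) := by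
    rw [Set.ncard_eq_toFinset_card']
    congr 2
    simp [Set.toFinset_setOf]
  -- grid size
  set x₀ : ℝ := 8*π*p*(n:ℝ)^2/Δ with hx₀
  have hx₀1 : 1 ≤ x₀ := by
    rw [hx₀, le_div_iff₀ hΔ0]
    have hn2 : (1:ℝ) ≤ (n:ℝ)^2 := by nlinarith
    have hpn : (1:ℝ) ≤ (p:ℝ) * (n:ℝ)^2 := by nlinarith
    nlinarith
  set K : ℕ := ⌈x₀⌉₊ with hKdef
  have hK0 : 0 < K := by
    rw [hKdef]
    exact Nat.one_le_ceil_iff.mpr (by linarith)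
  have hKR : (0:ℝ) < K := by exact_mod_cast hK0
  have hKge : x₀ ≤ (K:ℝ) := Nat.le_ceil x₀
  have hKle : (K:ℝ) ≤ 16 * π * p * (n:ℝ)^2 / Δ := by
    have h1 : (K:ℝ) < x₀ + 1 := Nat.ceil_lt_add_one (by linarith)
    have h2 : 16 * π * p * (n:ℝ)^2 / Δ = 2 * x₀ := by rw [hx₀]; ring
    linarith
  set par : Fin K → ℝ := fun j => (2*(j:ℝ)+1)*π/K with hpar
  set T : ((Fin p → Fin K) × (Fin p → Fin K)) → Finset (Str n) := fun ν =>
    Finset.univ.filter fun w : Str n =>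
      Δ/2 < (((qaoaU n Cm p (par ∘ ν.1) (par ∘ ν.2))ᴴ * P * qaoaU n Cm p (par ∘ ν.1) (par ∘ ν.2))
        w w).re with hTdef
  have hmark : ∀ ν, ((T ν).card : ℝ) ≤ 2 * ({z : Str n | C₁ ≤ c z}.ncard : ℝ) / Δ := by
    intro ν
    rw [hd₁']
    exact QA.markov_count (qaoaU n Cm p (par ∘ ν.1) (par ∘ ν.2))
      (QA.qaoaU_mul_star Cm hCsa p _ _) c C₁ hΔ0
  -- the set of improvable strings
  set S : Set (Str n) := {w : Str n | ∃ γ β : Fin p → ℝ,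
      (∀ k, γ k ∈ Set.Icc 0 (2 * π)) ∧ (∀ k, β k ∈ Set.Icc 0 (2 * π)) ∧
      Δ < (((qaoaU n Cm p γ β)ᴴ * P * qaoaU n Cm p γ β) w w).re} with hS
  have hSfin : S.Finite := Set.toFinite S
  have hsub : hSfin.toFinset ⊆ Finset.univ.biUnion T := by
    intro w hw
    rw [Set.Finite.mem_toFinset, hS] at hw
    obtain ⟨γ, β, hγmem, hβmem, hgt⟩ := hw
    set a : Fin p → Fin K := fun k => Classical.choose (QA.near_exists hK0 (hγmem k)) with ha
    set b : Fin p → Fin K := fun k => Classical.choose (QA.near_exists hK0 (hβmem k)) with hb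
    have haspec : ∀ k, |γ k - par (a k)| ≤ π/K := fun k =>
      Classical.choose_spec (QA.near_exists hK0 (hγmem k))
    have hbspec : ∀ k, |β k - par (b k)| ≤ π/K := fun k =>
      Classical.choose_spec (QA.near_exists hK0 (hβmem k))
    have hdiff : ‖qaoaU n Cm p γ β - qaoaU n Cm p (par ∘ a) (par ∘ b)‖
        ≤ p * (2 * (n:ℝ)^2 * (π/K)) :=
      QA.qaoaU_diff Cm hCsa hCn hn p γ β (par ∘ a) (par ∘ b) (by positivity)
        (fun k => haspec k) (fun k => hbspec k)
    have hent := QA.entry_diff P (qaoaU n Cm p γ β) (qaoaU n Cm p (par ∘ a) (par ∘ b))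
      (by rw [hP]; exact QA.proj_norm_le_one c C₁)
      (le_of_eq (QA.norm_qaoaU Cm hCsa p γ β))
      (le_of_eq (QA.norm_qaoaU Cm hCsa p _ _)) w
    have harith : 2 * ((p:ℝ) * (2 * (n:ℝ)^2 * (π/K))) ≤ Δ/2 := by
      have h1 : 2 * ((p:ℝ) * (2 * (n:ℝ)^2 * (π/K))) = (4*π*p*(n:ℝ)^2)/K := by ring
      rw [h1, div_le_iff₀ hKR]
      have h2 : 8*π*p*(n:ℝ)^2 ≤ K * Δ := by
        have := hKge
        rw [hx₀, div_le_iff₀ hΔ0] at this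
        linarith
      nlinarith
    have habs : |(((qaoaU n Cm p γ β)ᴴ * P * qaoaU n Cm p γ β) w w).re
        - (((qaoaU n Cm p (par ∘ a) (par ∘ b))ᴴ * P * qaoaU n Cm p (par ∘ a) (par ∘ b)) w w).re|
        ≤ Δ/2 := le_trans hent (by linarith)
    have hge : Δ/2 < (((qaoaU n Cm p (par ∘ a) (par ∘ b))ᴴ * P
        * qaoaU n Cm p (par ∘ a) (par ∘ b)) w w).re := by
      have h3 := (abs_sub_le_iff.mp habs).1
      linarith
    refine Finset.mem_biUnion.mpr ⟨(a, b), Finset.mem_univ _, ?_⟩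
    rw [hTdef]
    exact Finset.mem_filter.mpr ⟨Finset.mem_univ _, hge⟩
  -- counting
  have hMeq : S.ncard = hSfin.toFinset.card := Set.ncard_eq_toFinset_card S hSfin
  have hcount : (S.ncard : ℝ) ≤ ((K:ℝ)^(2*p)) * (2 * ({z : Str n | C₁ ≤ c z}.ncard : ℝ) / Δ) := by
    rw [hMeq]
    calc (hSfin.toFinset.card : ℝ) ≤ ((Finset.univ.biUnion T).card : ℝ) := by
          exact_mod_cast Finset.card_le_card hsub
    _ ≤ ((∑ ν : (Fin p → Fin K) × (Fin p → Fin K), (T ν).card : ℕ) : ℝ) := by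
          exact_mod_cast Finset.card_biUnion_le
    _ = ∑ ν : (Fin p → Fin K) × (Fin p → Fin K), ((T ν).card : ℝ) := by push_cast; rfl
    _ ≤ ∑ _ν : (Fin p → Fin K) × (Fin p → Fin K),
          (2 * ({z : Str n | C₁ ≤ c z}.ncard : ℝ) / Δ) := Finset.sum_le_sum fun ν _ => hmark ν
    _ = (Fintype.card ((Fin p → Fin K) × (Fin p → Fin K)) : ℝ)
          * (2 * ({z : Str n | C₁ ≤ c z}.ncard : ℝ) / Δ) := by
          rw [Finset.sum_const, Finset.card_univ, nsmul_eq_mul]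
    _ = ((K:ℝ)^(2*p)) * (2 * ({z : Str n | C₁ ≤ c z}.ncard : ℝ) / Δ) := by
          congr 1
          rw [Fintype.card_prod, Fintype.card_fun, Fintype.card_fin, Fintype.card_fin]
          push_cast
          rw [two_mul, pow_add]
  calc (S.ncard : ℝ) ≤ ((K:ℝ)^(2*p)) * (2 * ({z : Str n | C₁ ≤ c z}.ncard : ℝ) / Δ) := hcount
  _ ≤ ((16 * π * p * (n:ℝ)^2 / Δ)^(2*p)) * (2 * ({z : Str n | C₁ ≤ c z}.ncard : ℝ) / Δ) := by
      apply mul_le_mul_of_nonneg_right (pow_le_pow_left₀ (le_of_lt hKR) hKle _) (by positivity)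
  _ = (2 * ({z : Str n | C₁ ≤ c z}.ncard : ℝ) / Δ) * (16 * π * p * (n:ℝ)^2 / Δ)^(2*p) :=
      mul_comm _ _
end

section
/- Let G = (V,E) be a graph with m edges and maximum degree at most d ≥ 1, and let the cost function be C(z) = Σ_{⟨i,j⟩∈E} C_{⟨i,j⟩}(z_i, z_j) for z ∈ {−1,1}^V, where each edge term satisfies |C_{⟨i,j⟩}(·,·)| ≤ 1. Let c̄ = 2^{−|V|} Σ_{z∈{−1,1}^V} C(z)/m be the average cost per edge. Then for uniformly random z ∈ {−1,1}^V and any t > 0, the probability that |C(z)/m − c̄| ≥ t is at most (2d−1)/(m t²). -/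
/-!
STATEMENT 7: Concentration of the cost per edge around its mean for bounded-degree
graphs: for uniformly random `z ∈ {−1,1}^V` (encoded as `V → Bool`) and `t > 0`,
`Pr(|C(z)/m − c̄| ≥ t) ≤ (2d−1)/(m t²)`.
-/

/-- Probability of an event under the uniform distribution on a finite type. -/
noncomputable def unifPr {α : Type*} [Fintype α] (A : Set α) : ℝ :=
  (A.ncard : ℝ) / Fintype.card α

open Finset SimpleGraph

lemma split_indep {V : Type*} [Fintype V] [DecidableEq V] (p : V → Prop) [DecidablePred p]
    (f g : (V → Bool) → ℝ)
    (hf : ∀ z z' : V → Bool, (∀ v, p v → z v = z' v) → f z = f z')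
    (hg : ∀ z z' : V → Bool, (∀ v, ¬ p v → z v = z' v) → g z = g z') :
    (∑ z : V → Bool, f z * g z) * (Fintype.card (V → Bool) : ℝ)
      = (∑ z : V → Bool, f z) * (∑ z : V → Bool, g z) := by
  classical
  set E : ((∀ _ : { x // p x }, Bool) × ∀ _ : { x // ¬ p x }, Bool) ≃ (V → Bool) :=
    (Equiv.piEquivPiSubtypeProd p (fun _ => Bool)).symm with hE
  have hsum : ∀ h : (V → Bool) → ℝ, ∑ z, h z = ∑ ab, h (E ab) :=
    fun h => (Equiv.sum_comp E h).symm
  set f' : (∀ _ : { x // p x }, Bool) → ℝ := fun a => f (E (a, fun _ => false)) with hf'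
  set g' : (∀ _ : { x // ¬ p x }, Bool) → ℝ := fun b => g (E (fun _ => false, b)) with hg'
  have hEf : ∀ a b, f (E (a, b)) = f' a := by
    intro a b
    apply hf
    intro v hv
    simp [hE, Equiv.piEquivPiSubtypeProd, hv]
  have hEg : ∀ a b, g (E (a, b)) = g' b := by
    intro a b
    apply hg
    intro v hv
    simp [hE, Equiv.piEquivPiSubtypeProd, hv]
  have h1 : ∑ z : V → Bool, f z * g z = (∑ a, f' a) * (∑ b, g' b) := by
    rw [hsum, Fintype.sum_prod_type, Finset.sum_mul_sum]
    exact Finset.sum_congr rfl fun a _ => Finset.sum_congr rfl fun b _ => by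
      rw [hEf a b, hEg a b]
  have h2 : ∑ z : V → Bool, f z
      = (Fintype.card (∀ _ : { x // ¬ p x }, Bool) : ℝ) * ∑ a, f' a := by
    rw [hsum, Fintype.sum_prod_type]
    simp only [hEf]
    rw [Finset.sum_comm]
    simp [Finset.sum_const, mul_comm, Finset.mul_sum]
  have h3 : ∑ z : V → Bool, g z
      = (Fintype.card (∀ _ : { x // p x }, Bool) : ℝ) * ∑ b, g' b := by
    rw [hsum, Fintype.sum_prod_type]
    simp only [hEg]
    simp [Finset.sum_const, Finset.mul_sum]
  have hcard : (Fintype.card (V → Bool) : ℝ)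
      = (Fintype.card (∀ _ : { x // p x }, Bool) : ℝ)
        * (Fintype.card (∀ _ : { x // ¬ p x }, Bool) : ℝ) := by
    rw [← Nat.cast_mul, ← Fintype.card_prod, Fintype.card_congr E]
  rw [h1, h2, h3, hcard]; ring

lemma cheb {α : Type*} [Fintype α] [Nonempty α] (f : α → ℝ) (μ t : ℝ) (ht : 0 < t) :
    unifPr {z | t ≤ |f z - μ|} ≤ (∑ z : α, (f z - μ)^2) / (Fintype.card α * t^2) := by
  classical
  set A : Finset α := Finset.univ.filter (fun z => t ≤ |f z - μ|) with hA
  have hnc : ({z : α | t ≤ |f z - μ|}).ncard = A.card := by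
    rw [hA, Set.ncard_eq_toFinset_card']
    congr 1
    ext z
    simp
  have key : (A.card : ℝ) * t ^ 2 ≤ ∑ z : α, (f z - μ) ^ 2 := by
    calc (A.card : ℝ) * t ^ 2 = ∑ _z ∈ A, t ^ 2 := by rw [Finset.sum_const, nsmul_eq_mul]
    _ ≤ ∑ z ∈ A, (f z - μ) ^ 2 := by
        apply Finset.sum_le_sum
        intro z hz
        have : t ≤ |f z - μ| := (Finset.mem_filter.mp hz).2
        nlinarith [abs_nonneg (f z - μ), sq_abs (f z - μ)]
    _ ≤ ∑ z : α, (f z - μ) ^ 2 :=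
        Finset.sum_le_sum_of_subset_of_nonneg (Finset.subset_univ A)
          (fun z _ _ => sq_nonneg _)
  have hcard : (0:ℝ) < Fintype.card α := by exact_mod_cast Fintype.card_pos
  rw [unifPr, hnc, div_le_div_iff₀ hcard (by positivity)]
  nlinarith [key, Finset.sum_nonneg (fun z (_ : z ∈ Finset.univ) => sq_nonneg (f z - μ))]

lemma count_share {V : Type*} [Fintype V] [DecidableEq V]
    (G : SimpleGraph V) [DecidableRel G.Adj] (d : ℕ) (hd : 1 ≤ d)
    (hdeg : ∀ v, G.degree v ≤ d) (e : Sym2 V) (he : e ∈ G.edgeFinset) :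
    (G.edgeFinset.filter (fun e' => ∃ v, v ∈ e ∧ v ∈ e')).card ≤ 2 * d - 1 := by
  classical
  induction e using Sym2.ind with
  | _ a b =>
    have hsub : (G.edgeFinset.filter (fun e' => ∃ v, v ∈ s(a,b) ∧ v ∈ e'))
        ⊆ G.incidenceFinset a ∪ G.incidenceFinset b := by
      intro e' he'
      rw [Finset.mem_filter] at he'
      obtain ⟨hmem, v, hv1, hv2⟩ := he'
      rw [Sym2.mem_iff] at hv1
      rw [Finset.mem_union, mem_incidenceFinset, mem_incidenceFinset]
      rcases hv1 with rfl | rfl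
      · exact Or.inl ⟨SimpleGraph.mem_edgeFinset.mp hmem, hv2⟩
      · exact Or.inr ⟨SimpleGraph.mem_edgeFinset.mp hmem, hv2⟩
    have hinter : 1 ≤ (G.incidenceFinset a ∩ G.incidenceFinset b).card := by
      rw [Nat.one_le_iff_ne_zero, Ne, Finset.card_eq_zero, ← Ne,
        ← Finset.nonempty_iff_ne_empty]
      refine ⟨s(a,b), ?_⟩
      rw [Finset.mem_inter, mem_incidenceFinset, mem_incidenceFinset]
      have hedge := SimpleGraph.mem_edgeFinset.mp he
      exact ⟨⟨hedge, by simp⟩, ⟨hedge, by simp⟩⟩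
    have := Finset.card_union_add_card_inter (G.incidenceFinset a) (G.incidenceFinset b)
    have hca : (G.incidenceFinset a).card ≤ d := by
      rw [SimpleGraph.card_incidenceFinset_eq_degree]; exact hdeg a
    have hcb : (G.incidenceFinset b).card ≤ d := by
      rw [SimpleGraph.card_incidenceFinset_eq_degree]; exact hdeg b
    have := Finset.card_le_card hsub
    omega

theorem stmt7 {V : Type*} [Fintype V] [DecidableEq V]
    (G : SimpleGraph V) [DecidableRel G.Adj]
    (d m : ℕ) (hd : 1 ≤ d) (hm : G.edgeFinset.card = m)
    (hdeg : ∀ v, G.degree v ≤ d)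
    -- the edge terms `C_{⟨i,j⟩}(z_i, z_j)`: a number attached to each edge and string,
    -- depending only on the two endpoint bits, and bounded by 1 in absolute value
    (F : Sym2 V → (V → Bool) → ℝ)
    (hFlocal : ∀ e ∈ G.edgeFinset, ∀ z z' : V → Bool,
      (∀ v ∈ e, z v = z' v) → F e z = F e z')
    (hFbound : ∀ e ∈ G.edgeFinset, ∀ z : V → Bool, |F e z| ≤ 1)
    -- the total cost function and its average value per edge
    (C : (V → Bool) → ℝ) (hC : ∀ z, C z = ∑ e ∈ G.edgeFinset, F e z)
    (cbar : ℝ)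
    (hcbar : cbar = (∑ z : V → Bool, C z / m) / 2 ^ (Fintype.card V))
    (t : ℝ) (ht : 0 < t) :
    unifPr {z : V → Bool | t ≤ |C z / m - cbar|} ≤ (2 * d - 1) / (m * t ^ 2) := by
  classical
  rcases Nat.eq_zero_or_pos m with rfl | hmpos
  · have hc0 : cbar = 0 := by simp [hcbar]
    have hset : {z : V → Bool | t ≤ |C z / ((0:ℕ):ℝ) - cbar|} = ∅ := by
      ext z
      simp only [Set.mem_setOf_eq, Nat.cast_zero, div_zero, hc0, sub_zero, abs_zero,
        Set.mem_empty_iff_false, iff_false, not_le]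
      exact ht
    rw [hset]
    simp [unifPr]
  -- main case
  have hmR : (0:ℝ) < m := by exact_mod_cast hmpos
  set n : ℝ := (Fintype.card (V → Bool) : ℝ) with hn
  have hnpos : (0:ℝ) < n := by
    rw [hn]; exact_mod_cast Fintype.card_pos
  have hn2 : n = 2 ^ (Fintype.card V) := by
    rw [hn]; norm_cast
    simp [Fintype.card_fun]
  -- centered edge terms
  set μ : Sym2 V → ℝ := fun e => (∑ z : V → Bool, F e z) / n with hμ
  set Gf : Sym2 V → (V → Bool) → ℝ := fun e z => F e z - μ e with hGf
  have hGsum : ∀ e, ∑ z : V → Bool, Gf e z = 0 := by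
    intro e
    simp only [hGf, Finset.sum_sub_distrib, Finset.sum_const, nsmul_eq_mul, hμ]
    rw [Finset.card_univ, ← hn]
    field_simp
    ring
  have hGsq : ∀ e ∈ G.edgeFinset, ∑ z : V → Bool, (Gf e z)^2 ≤ n := by
    intro e he
    have hexp : ∑ z : V → Bool, (Gf e z)^2
        = (∑ z : V → Bool, (F e z)^2) - n * (μ e)^2 := by
      have : ∀ z : V → Bool, (Gf e z)^2 = (F e z)^2 - 2 * μ e * F e z + (μ e)^2 := by
        intro z; simp only [hGf]; ring
      rw [Finset.sum_congr rfl fun z _ => this z]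
      rw [Finset.sum_add_distrib, Finset.sum_sub_distrib, ← Finset.mul_sum,
        Finset.sum_const, nsmul_eq_mul, Finset.card_univ, ← hn]
      have hsF : ∑ z : V → Bool, F e z = n * μ e := by
        rw [hμ]; field_simp
      rw [hsF]; ring
    rw [hexp]
    have h1 : ∑ z : V → Bool, (F e z)^2 ≤ n := by
      calc ∑ z : V → Bool, (F e z)^2 ≤ ∑ _z : V → Bool, (1:ℝ) := by
            apply Finset.sum_le_sum
            intro z _
            have := hFbound e he z
            nlinarith [sq_abs (F e z), abs_nonneg (F e z)]
      _ = n := by simp [Finset.card_univ, hn]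
    nlinarith [sq_nonneg (μ e)]
  -- covariance
  set S : Sym2 V → Sym2 V → ℝ := fun e e' => ∑ z : V → Bool, Gf e z * Gf e' z with hS
  have hSzero : ∀ e ∈ G.edgeFinset, ∀ e' ∈ G.edgeFinset,
      (¬ ∃ v, v ∈ e ∧ v ∈ e') → S e e' = 0 := by
    intro e he e' he' hdisj
    have key := split_indep (fun v => v ∈ e) (Gf e) (Gf e')
      (fun z z' hz => by
        simp only [hGf]
        rw [hFlocal e he z z' (fun v hv => hz v hv)])
      (fun z z' hz => by
        simp only [hGf]
        rw [hFlocal e' he' z z' (fun v hv => hz v (fun hve => hdisj ⟨v, hve, hv⟩))])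
    rw [hGsum e, hGsum e', zero_mul] at key
    have : S e e' * n = 0 := key
    exact (mul_eq_zero.mp this).resolve_right (ne_of_gt hnpos)
  have hSbound : ∀ e ∈ G.edgeFinset, ∀ e' ∈ G.edgeFinset, S e e' ≤ n := by
    intro e he e' he'
    have cs := Finset.sum_mul_sq_le_sq_mul_sq Finset.univ (Gf e) (Gf e')
    have h1 := hGsq e he
    have h2 := hGsq e' he'
    have hsq : (S e e')^2 ≤ n * n := by
      refine le_trans cs ?_
      have hnn : (0:ℝ) ≤ ∑ z : V → Bool, (Gf e' z)^2 :=
        Finset.sum_nonneg fun z _ => sq_nonneg _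
      have hnn2 : (0:ℝ) ≤ ∑ z : V → Bool, (Gf e z)^2 :=
        Finset.sum_nonneg fun z _ => sq_nonneg _
      nlinarith
    nlinarith [hnpos]
  -- variance bound
  have hvar : ∑ z : V → Bool, (C z / m - cbar)^2 ≤ ((2*(d:ℝ) - 1) * n) / m := by
    have hcent : ∀ z, C z / m - cbar = (∑ e ∈ G.edgeFinset, Gf e z) / m := by
      intro z
      have hcbar' : cbar = (∑ e ∈ G.edgeFinset, μ e) / m := by
        rw [hcbar, ← Finset.sum_div, ← hn2]
        rw [Finset.sum_congr rfl fun z _ => hC z, Finset.sum_comm]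
        simp only [hμ]
        rw [Finset.sum_div, Finset.sum_div]
        rw [Finset.sum_div]
        exact Finset.sum_congr rfl fun e _ => by rw [div_div, div_div, mul_comm]
      rw [hcbar', hC z]
      simp only [hGf]
      rw [Finset.sum_sub_distrib, sub_div]
    have hsq : ∑ z : V → Bool, (C z / m - cbar)^2
        = (∑ e ∈ G.edgeFinset, ∑ e' ∈ G.edgeFinset, S e e') / m^2 := by
      rw [Finset.sum_congr rfl fun z _ => by
        rw [hcent z, div_pow, sq (∑ e ∈ G.edgeFinset, Gf e z), Finset.sum_mul_sum]]
      rw [← Finset.sum_div]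
      congr 1
      rw [Finset.sum_comm]
      simp only [hS]
      rw [Finset.sum_congr rfl fun e _ => Finset.sum_comm]
    rw [hsq]
    have hbound : ∑ e ∈ G.edgeFinset, ∑ e' ∈ G.edgeFinset, S e e'
        ≤ m * ((2*(d:ℝ) - 1) * n) := by
      calc ∑ e ∈ G.edgeFinset, ∑ e' ∈ G.edgeFinset, S e e'
          ≤ ∑ _e ∈ G.edgeFinset, (2*(d:ℝ) - 1) * n := by
            apply Finset.sum_le_sum
            intro e he
            rw [← Finset.sum_filter_add_sum_filter_not G.edgeFinset
              (fun e' => ∃ v, v ∈ e ∧ v ∈ e') (S e)]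
            have hz : ∑ e' ∈ G.edgeFinset.filter (fun e' => ¬ ∃ v, v ∈ e ∧ v ∈ e'),
                S e e' = 0 := by
              apply Finset.sum_eq_zero
              intro e' he'
              rw [Finset.mem_filter] at he'
              exact hSzero e he e' he'.1 he'.2
            rw [hz, add_zero]
            calc ∑ e' ∈ G.edgeFinset.filter (fun e' => ∃ v, v ∈ e ∧ v ∈ e'), S e e'
                ≤ ∑ e' ∈ G.edgeFinset.filter (fun e' => ∃ v, v ∈ e ∧ v ∈ e'), n := by
                  apply Finset.sum_le_sum
                  intro e' he'
                  rw [Finset.mem_filter] at he'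
                  exact hSbound e he e' he'.1
              _ = ((G.edgeFinset.filter (fun e' => ∃ v, v ∈ e ∧ v ∈ e')).card : ℝ) * n := by
                  rw [Finset.sum_const, nsmul_eq_mul]
              _ ≤ (2*(d:ℝ) - 1) * n := by
                  apply mul_le_mul_of_nonneg_right _ (le_of_lt hnpos)
                  have := count_share G d hd hdeg e he
                  have : ((G.edgeFinset.filter (fun e' => ∃ v, v ∈ e ∧ v ∈ e')).card : ℝ)
                      ≤ ((2*d - 1 : ℕ) : ℝ) := by exact_mod_cast this
                  refine le_trans this ?_
                  push_cast [Nat.cast_sub (by omega : 1 ≤ 2*d)]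
                  ring_nf
                  rfl
        _ = m * ((2*(d:ℝ) - 1) * n) := by
            rw [Finset.sum_const, nsmul_eq_mul, hm]
    have hne : (m:ℝ) ≠ 0 := ne_of_gt hmR
    have hnne : n ≠ 0 := ne_of_gt hnpos
    rw [div_le_div_iff₀ (by positivity : (0:ℝ) < (m:ℝ)^2) hmR]
    calc (∑ e ∈ G.edgeFinset, ∑ e' ∈ G.edgeFinset, S e e') * m
        ≤ (m * ((2*(d:ℝ) - 1) * n)) * m := mul_le_mul_of_nonneg_right hbound hmR.le
      _ = (2*(d:ℝ) - 1) * n * (m:ℝ)^2 := by ring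
  -- conclude via Chebyshev
  have hcheb := cheb (fun z : V → Bool => C z / m) cbar t ht
  refine le_trans hcheb ?_
  rw [← hn]
  have hne : (m:ℝ) ≠ 0 := ne_of_gt hmR
  have hnne : n ≠ 0 := ne_of_gt hnpos
  have hte : t ≠ 0 := ne_of_gt ht
  calc (∑ z : V → Bool, (C z / m - cbar)^2) / (n * t^2)
      ≤ (((2*(d:ℝ) - 1) * n) / m) / (n * t^2) := by gcongr
    _ = (2*(d:ℝ) - 1) / (m * t^2) := by field_simp
end

section
/- Let H be a Hermitian N×N complex matrix, let β ≥ 0, and let ρ_β = e^{−βH}/Tr(e^{−βH}) be the associated thermal (Gibbs) density matrix. Then for every unitary N×N matrix U, Tr(H U ρ_β U†) ≥ Tr(H ρ_β); that is, no unitary conjugation of the thermal state can lower the expected energy. -/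
/-!
STATEMENT 8: The principle of minimum energy: no unitary conjugation of a thermal
(Gibbs) state can lower the expected energy, i.e.
`Tr(H U ρ_β U†) ≥ Tr(H ρ_β)` for every unitary `U`.
-/

open scoped Matrix

lemma keyineq (N : ℕ) (lam : Fin N → ℝ) (β : ℝ) (hβ : 0 ≤ β)
    (S : Fin N → Fin N → ℝ) (hS : ∀ i j, 0 ≤ S i j)
    (hrow : ∀ i, ∑ j, S i j = 1) (hcol : ∀ j, ∑ i, S i j = 1) :
    ∑ i, lam i * Real.exp (-(β * lam i)) ≤
      ∑ i, ∑ j, lam i * Real.exp (-(β * lam j)) * S i j := by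
  set p : Fin N → ℝ := fun i => Real.exp (-(β * lam i)) with hp
  have hLHS : ∑ i, lam i * p i = ∑ i, ∑ j, lam j * p j * S i j := by
    rw [Finset.sum_comm]
    refine Finset.sum_congr rfl fun j _ => ?_
    rw [← Finset.mul_sum, hcol, mul_one]
  rw [hLHS, ← sub_nonneg, ← Finset.sum_sub_distrib]
  simp_rw [← Finset.sum_sub_distrib]
  have hdiff : ∀ i j, lam i * p j * S i j - lam j * p j * S i j
      = (lam i - lam j) * p j * S i j := by intro i j; ring
  change 0 ≤ ∑ i, ∑ j, (lam i * p j * S i j - lam j * p j * S i j)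
  simp_rw [hdiff]
  rcases eq_or_lt_of_le hβ with hβ0 | hβpos
  · -- β = 0
    have hp1 : ∀ j, p j = 1 := by intro j; simp [hp, ← hβ0]
    simp_rw [hp1, mul_one]
    have : (∑ i, ∑ j, (lam i - lam j) * S i j) = 0 := by
      simp_rw [sub_mul, Finset.sum_sub_distrib]
      have h1 : ∑ i, ∑ j, lam i * S i j = ∑ i, lam i := by
        refine Finset.sum_congr rfl fun i _ => ?_
        rw [← Finset.mul_sum, hrow, mul_one]
      have h2 : ∑ i, ∑ j, lam j * S i j = ∑ i, lam i := by
        rw [Finset.sum_comm]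
        refine Finset.sum_congr rfl fun j _ => ?_
        rw [← Finset.mul_sum, hcol, mul_one]
      rw [h1, h2, sub_self]
    rw [this]
  · -- β > 0
    have hmain : 0 ≤ β * ∑ i, ∑ j, (lam i - lam j) * p j * S i j := by
      rw [Finset.mul_sum]
      simp_rw [Finset.mul_sum]
      have hzero : (∑ i, ∑ j, (p j - p i) * S i j) = 0 := by
        simp_rw [sub_mul, Finset.sum_sub_distrib]
        have h1 : ∑ i, ∑ j, p j * S i j = ∑ j, p j := by
          rw [Finset.sum_comm]
          refine Finset.sum_congr rfl fun j _ => ?_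
          rw [← Finset.mul_sum, hcol, mul_one]
        have h2 : ∑ i, ∑ j, p i * S i j = ∑ i, p i := by
          refine Finset.sum_congr rfl fun i _ => ?_
          rw [← Finset.mul_sum, hrow, mul_one]
        rw [h1, h2, sub_self]
      calc (0:ℝ) = ∑ i, ∑ j, (p j - p i) * S i j := hzero.symm
        _ ≤ ∑ i, ∑ j, β * ((lam i - lam j) * p j * S i j) := by
            refine Finset.sum_le_sum fun i _ => Finset.sum_le_sum fun j _ => ?_
            have hexp : Real.exp (-(β * lam j)) * Real.exp (β * (lam j - lam i))
                = Real.exp (-(β * lam i)) := by rw [← Real.exp_add]; ring_nf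
            have h1x : β * (lam j - lam i) + 1 ≤ Real.exp (β * (lam j - lam i)) :=
              Real.add_one_le_exp _
            have hppos : 0 < p j := Real.exp_pos _
            have hkey : p j - p i ≤ β * ((lam i - lam j) * p j) := by
              have := mul_le_mul_of_nonneg_left h1x (le_of_lt hppos)
              simp only [hp] at *
              nlinarith [hexp]
            have hSij := hS i j
            nlinarith [hkey, hSij]
    exact nonneg_of_mul_nonneg_right hmain hβpos


theorem stmt8 (N : ℕ) (H : Matrix (Fin N) (Fin N) ℂ) (hH : H.IsHermitian)
    (β : ℝ) (hβ : 0 ≤ β)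
    (ρ : Matrix (Fin N) (Fin N) ℂ)
    (hρ : ρ = (Matrix.trace (mexp ((-(β : ℂ)) • H)))⁻¹ • mexp ((-(β : ℂ)) • H)) :
    ∀ U : Matrix (Fin N) (Fin N) ℂ, U ∈ Matrix.unitaryGroup (Fin N) ℂ →
      (Matrix.trace (H * ρ)).re ≤ (Matrix.trace (H * (U * ρ * star U))).re := by
  intro U hU
  classical
  subst hρ
  set lam : Fin N → ℝ := hH.eigenvalues with hlamdef
  set V : Matrix (Fin N) (Fin N) ℂ := (hH.eigenvectorUnitary : Matrix (Fin N) (Fin N) ℂ) with hVdef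
  have hVmem : V ∈ Matrix.unitaryGroup (Fin N) ℂ := hH.eigenvectorUnitary.2
  have hV1 : star V * V = 1 := Matrix.mem_unitaryGroup_iff'.mp hVmem
  have hV2 : V * star V = 1 := Matrix.mem_unitaryGroup_iff.mp hVmem
  have hU1 : star U * U = 1 := Matrix.mem_unitaryGroup_iff'.mp hU
  have hU2 : U * star U = 1 := Matrix.mem_unitaryGroup_iff.mp hU
  have cV1 : ∀ A : Matrix (Fin N) (Fin N) ℂ, star V * (V * A) = A := fun A => by
    rw [← Matrix.mul_assoc, hV1, Matrix.one_mul]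
  have cV2 : ∀ A : Matrix (Fin N) (Fin N) ℂ, V * (star V * A) = A := fun A => by
    rw [← Matrix.mul_assoc, hV2, Matrix.one_mul]
  have cU1 : ∀ A : Matrix (Fin N) (Fin N) ℂ, star U * (U * A) = A := fun A => by
    rw [← Matrix.mul_assoc, hU1, Matrix.one_mul]
  have cU2 : ∀ A : Matrix (Fin N) (Fin N) ℂ, U * (star U * A) = A := fun A => by
    rw [← Matrix.mul_assoc, hU2, Matrix.one_mul]
  have hspec : H = V * Matrix.diagonal (fun i => (lam i : ℂ)) * star V := by
    have := hH.spectral_theorem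
    rw [Unitary.conjStarAlgAut_apply] at this
    exact this
  -- exponential
  set d : Fin N → ℂ := fun i => Complex.exp ((-(β:ℂ)) * lam i) with hd
  have hsm : (-(β:ℂ)) • H = V * Matrix.diagonal ((-(β:ℂ)) • fun i => (lam i : ℂ)) * star V := by
    rw [hspec, Matrix.diagonal_smul, Matrix.mul_smul, Matrix.smul_mul]
  have hconj : ∀ A : Matrix (Fin N) (Fin N) ℂ,
      NormedSpace.exp (V * A * star V) = V * NormedSpace.exp A * star V := by
    intro A
    have := Matrix.exp_units_conj
      (⟨V, star V, hV2, hV1⟩ : (Matrix (Fin N) (Fin N) ℂ)ˣ) A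
    simpa using this
  have hexp : mexp ((-(β:ℂ)) • H) = V * Matrix.diagonal d * star V := by
    have hpd : NormedSpace.exp ((-(β:ℂ)) • fun i => (lam i : ℂ)) = d := by
      funext i
      rw [Pi.coe_exp]
      simp [hd, ← Complex.exp_eq_exp_ℂ]
    rw [mexp, hsm, hconj, Matrix.exp_diagonal, hpd]
  set rexp : Fin N → ℝ := fun i => Real.exp (-(β * lam i)) with hrexp
  have hdr : ∀ i, d i = ((rexp i : ℝ) : ℂ) := by
    intro i
    simp [hd, hrexp, ← Complex.ofReal_exp]
    norm_cast
  set Z : ℝ := ∑ i, rexp i with hZ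
  have htr : ∀ M : Matrix (Fin N) (Fin N) ℂ,
      Matrix.trace (V * M * star V) = Matrix.trace M := by
    intro M
    rw [Matrix.trace_mul_cycle, hV1, Matrix.one_mul]
  have htrZ : Matrix.trace (mexp ((-(β:ℂ)) • H)) = (Z : ℂ) := by
    rw [hexp, htr, Matrix.trace_diagonal]
    simp [hdr, hZ]
  set W : Matrix (Fin N) (Fin N) ℂ := star V * U * V with hWdef
  have hWstar : star W = star V * star U * V := by
    rw [hWdef]
    simp [Matrix.star_mul, star_star, Matrix.mul_assoc]
  have hW1 : star W * W = 1 := by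
    rw [hWstar, hWdef]
    simp only [Matrix.mul_assoc, cV1, cV2, cU1, cU2, hV1, hV2, Matrix.mul_one]
  have hW2 : W * star W = 1 := by
    rw [hWstar, hWdef]
    simp only [Matrix.mul_assoc, cV1, cV2, cU1, cU2, hV1, hV2, Matrix.mul_one]
  set S : Fin N → Fin N → ℝ := fun i j => Complex.normSq (W i j) with hSdef
  have hSnn : ∀ i j, 0 ≤ S i j := fun i j => Complex.normSq_nonneg _
  have hSrow : ∀ i, ∑ j, S i j = 1 := by
    intro i
    have h := congrArg (fun M : Matrix (Fin N) (Fin N) ℂ => M i i) hW2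
    simp only [Matrix.mul_apply, Matrix.one_apply_eq, Matrix.star_apply] at h
    have h2 : (∑ j, ((S i j : ℝ) : ℂ)) = 1 := by
      rw [← h]
      refine Finset.sum_congr rfl fun j _ => ?_
      rw [hSdef]
      exact (Complex.mul_conj (W i j)).symm ▸ rfl
    have := congrArg Complex.re h2
    simpa using this
  have hScol : ∀ j, ∑ i, S i j = 1 := by
    intro j
    have h := congrArg (fun M : Matrix (Fin N) (Fin N) ℂ => M j j) hW1
    simp only [Matrix.mul_apply, Matrix.one_apply_eq, Matrix.star_apply] at h
    have h2 : (∑ i, ((S i j : ℝ) : ℂ)) = 1 := by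
      rw [← h]
      refine Finset.sum_congr rfl fun i _ => ?_
      rw [hSdef, mul_comm]
      exact (Complex.mul_conj (W i j)).symm ▸ rfl
    have := congrArg Complex.re h2
    simpa using this
  -- trace of H * E
  have hHE : H * (V * Matrix.diagonal d * star V)
      = V * (Matrix.diagonal (fun i => (lam i : ℂ)) * Matrix.diagonal d) * star V := by
    rw [hspec]
    simp only [Matrix.mul_assoc, cV1, cV2]
  have ht1 : Matrix.trace (H * mexp ((-(β:ℂ)) • H)) = ((∑ i, lam i * rexp i : ℝ) : ℂ) := by
    rw [hexp, hHE, htr, Matrix.diagonal_mul_diagonal, Matrix.trace_diagonal]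
    rw [Complex.ofReal_sum]
    refine Finset.sum_congr rfl fun i _ => ?_
    rw [hdr]
    push_cast
    ring
  -- trace of H * (U E U*)
  have hUW : U = V * W * star V := by
    rw [hWdef]
    simp only [Matrix.mul_assoc, cV1, cV2, hV1, hV2, Matrix.mul_one]
  have hHUE : H * (U * (V * Matrix.diagonal d * star V) * star U)
      = V * (Matrix.diagonal (fun i => (lam i : ℂ)) * (W * Matrix.diagonal d * star W))
        * star V := by
    conv_lhs => rw [hspec, hUW]
    simp only [Matrix.star_mul, star_star]
    simp only [Matrix.mul_assoc, cV1, cV2, hV1, hV2, Matrix.mul_one]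
  have ht2 : Matrix.trace (H * (U * mexp ((-(β:ℂ)) • H) * star U))
      = ((∑ i, ∑ j, lam i * rexp j * S i j : ℝ) : ℂ) := by
    rw [hexp, hHUE, htr]
    rw [Matrix.trace, Complex.ofReal_sum]
    refine Finset.sum_congr rfl fun i _ => ?_
    rw [Complex.ofReal_sum]
    simp only [Matrix.diag_apply, Matrix.mul_apply, Matrix.diagonal_apply,
      Matrix.star_apply, ite_mul, mul_ite, zero_mul, mul_zero,
      Finset.sum_ite_eq, Finset.sum_ite_eq', Finset.mem_univ, if_true]
    rw [Finset.mul_sum]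
    refine Finset.sum_congr rfl fun j _ => ?_
    rw [hdr]
    have hws : W i j * ((rexp j : ℝ) : ℂ) * star (W i j)
        = ((rexp j : ℝ) : ℂ) * ((S i j : ℝ) : ℂ) := by
      rw [mul_comm (W i j) _, mul_assoc]
      congr 1
      rw [hSdef]
      exact Complex.mul_conj (W i j)
    rw [hws]
    push_cast
    ring
  -- assemble
  have hZnn : 0 ≤ Z := Finset.sum_nonneg fun i _ => (Real.exp_pos _).le
  have hc : (0:ℝ) ≤ Z⁻¹ := inv_nonneg.mpr hZnn
  rw [htrZ]
  have hcast : ((Z:ℂ))⁻¹ = ((Z⁻¹ : ℝ) : ℂ) := by push_cast; ring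
  rw [hcast]
  simp only [Matrix.mul_smul, Matrix.smul_mul, Matrix.trace_smul]
  rw [ht1, ht2]
  simp only [smul_eq_mul, ← Complex.ofReal_mul, Complex.ofReal_re]
  exact mul_le_mul_of_nonneg_left
    (keyineq N lam β hβ S hSnn hSrow hScol) hc
end

section
/- Let G = (V,E) be a graph on vertex set {1,…,n}, and on the n-qubit Hilbert space let C_Z = −Σ_{⟨i,j⟩∈E} Z_i Z_j and B = Σ_{i=1}^n X_i. Then for every string w ∈ {−1,1}ⁿ with computational basis state |w⟩ and every β ∈ ℝ, ⟨w| e^{iβB} C_Z e^{−iβB} |w⟩ = cos²(2β) · C_Z(w), where C_Z(w) = −Σ_{⟨i,j⟩∈E} w_i w_j. -/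
/-!
STATEMENT 9: For the `p = 1/2` QAOA (a quantum walk) on any graph,
`⟨w| e^{iβB} C_Z e^{−iβB} |w⟩ = cos²(2β) · C_Z(w)`.
-/

open scoped Matrix

/-- The operator `Z_i Z_j` attached to the edge `⟨i,j⟩`, as a function of the
unordered edge. -/
noncomputable def ZZedge (n : ℕ) : Sym2 (Fin n) → Mat n :=
  Sym2.lift ⟨fun i j => PauliZ n i * PauliZ n j, fun i j => by
    simp [PauliZ, Matrix.diagonal_mul_diagonal, mul_comm]⟩

/-- The MaxCut operator `C_Z = −Σ_{⟨i,j⟩∈E} Z_i Z_j`. -/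
noncomputable def CZop (n : ℕ) (G : SimpleGraph (Fin n)) [DecidableRel G.Adj] : Mat n :=
  -∑ e ∈ G.edgeFinset, ZZedge n e

/-- The classical value `C_Z(w) = −Σ_{⟨i,j⟩∈E} w_i w_j`. -/
noncomputable def CZval (n : ℕ) (G : SimpleGraph (Fin n)) [DecidableRel G.Adj]
    (w : Str n) : ℝ :=
  -∑ e ∈ G.edgeFinset, Sym2.lift ⟨fun i j => sgn (w i) * sgn (w j), fun i j => by ring⟩ e

namespace QaoaAux

open NormedSpace

lemma exp_smul_involution {𝔸 : Type*} [NormedRing 𝔸] [NormedAlgebra ℂ 𝔸] [CompleteSpace 𝔸]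
    (z : ℂ) (A : 𝔸) (hA : A * A = 1) :
    exp (z • A) = Complex.cosh z • (1 : 𝔸) + Complex.sinh z • A := by
  have hA2 : ∀ k : ℕ, A ^ (2 * k) = 1 := fun k => by rw [pow_mul, sq, hA, one_pow]
  have hA3 : ∀ k : ℕ, A ^ (2 * k + 1) = A := fun k => by rw [pow_succ, hA2, one_mul]
  rw [exp_eq_tsum ℂ]
  refine HasSum.tsum_eq (HasSum.even_add_odd ?_ ?_)
  · have h := (Complex.hasSum_cosh z).smul_const (1 : 𝔸)
    convert h using 1
    funext k
    rw [smul_pow, hA2 k, smul_smul, inv_mul_eq_div]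
  · have h := (Complex.hasSum_sinh z).smul_const A
    convert h using 1
    funext k
    rw [smul_pow, hA3 k, smul_smul, inv_mul_eq_div]

lemma matExp_involution {ι : Type*} [Fintype ι] [DecidableEq ι]
    (z : ℂ) (A : Matrix ι ι ℂ) (hA : A * A = 1) :
    mexp (z • A) = Complex.cosh z • (1 : Matrix ι ι ℂ) + Complex.sinh z • A := by
  letI : SeminormedRing (Matrix ι ι ℂ) := Matrix.linftyOpSemiNormedRing
  letI : NormedRing (Matrix ι ι ℂ) := Matrix.linftyOpNormedRing
  letI : NormedAlgebra ℂ (Matrix ι ι ℂ) := Matrix.linftyOpNormedAlgebra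
  exact exp_smul_involution z A hA

lemma mexp_mul_mexp_neg {ι : Type*} [Fintype ι] [DecidableEq ι] (A : Matrix ι ι ℂ) :
    mexp A * mexp (-A) = 1 := by
  rw [mexp, mexp, ← Matrix.exp_add_of_commute A (-A) (Commute.refl A).neg_right,
    add_neg_cancel, exp_zero]

variable {n : ℕ}

/-- Flip bit `i`. -/
def flip (z : Str n) (i : Fin n) : Str n := Function.update z i (!z i)

lemma flip_flip (z : Str n) (i : Fin n) : flip (flip z i) i = z := by
  funext k
  by_cases h : k = i
  · subst h; simp [flip]
  · simp [flip, Function.update_of_ne h]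

lemma flip_ne (z : Str n) (i : Fin n) : flip z i ≠ z := by
  intro h
  have := congrFun h i
  simp [flip] at this

lemma flip_apply_ne {i j : Fin n} (h : j ≠ i) (z : Str n) : flip z i j = z j :=
  Function.update_of_ne h _ _

lemma mulX_apply (M : Mat n) (i : Fin n) (z w : Str n) :
    (M * PauliX n i) z w = M z (flip w i) := by
  rw [Matrix.mul_apply, Finset.sum_eq_single (flip w i)]
  · have : w = Function.update (flip w i) i (!(flip w i) i) := by
      rw [show Function.update (flip w i) i (!(flip w i) i) = flip (flip w i) i from rfl,
        flip_flip]
    simp [PauliX, ← this]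
  · intro b _ hb
    rw [PauliX, Matrix.of_apply, if_neg, mul_zero]
    intro hw
    apply hb
    have : flip b i = w := hw.symm
    rw [← this, flip_flip]
  · intro h; exact absurd (Finset.mem_univ _) h

lemma Xmul_apply (M : Mat n) (i : Fin n) (z w : Str n) :
    (PauliX n i * M) z w = M (flip z i) w := by
  rw [Matrix.mul_apply, Finset.sum_eq_single (flip z i)]
  · simp [PauliX, flip]
  · intro b _ hb
    rw [PauliX, Matrix.of_apply, if_neg (by exact fun h => hb h), zero_mul]
  · intro h; exact absurd (Finset.mem_univ _) h

lemma X_mul_X_self (i : Fin n) : PauliX n i * PauliX n i = 1 := by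
  ext z w
  rw [Xmul_apply]
  have key : Function.update (flip z i) i (!(flip z i) i) = z := flip_flip z i
  simp only [PauliX, Matrix.of_apply, key, Matrix.one_apply]
  simp [eq_comm]

lemma flip_comm {i j : Fin n} (h : i ≠ j) (z : Str n) :
    flip (flip z i) j = flip (flip z j) i := by
  simp only [flip, Function.update_of_ne h.symm, Function.update_of_ne h]
  exact Function.update_comm h _ _ _

lemma X_comm (i j : Fin n) : Commute (PauliX n i) (PauliX n j) := by
  by_cases h : i = j
  · subst h; exact Commute.refl _
  · show _ = _
    ext z w
    rw [Xmul_apply, Xmul_apply]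
    have key : Function.update (flip z i) j (!(flip z i) j)
        = Function.update (flip z j) i (!(flip z j) i) := flip_comm h z
    simp [PauliX, key]

lemma ZX_comm {i j : Fin n} (h : i ≠ j) : Commute (PauliZ n i) (PauliX n j) := by
  show _ = _
  ext z w
  simp only [PauliZ, Matrix.diagonal_mul, Matrix.mul_diagonal, PauliX, Matrix.of_apply]
  by_cases hw : w = Function.update z j (!z j)
  · subst hw
    simp [Function.update_of_ne h]
  · simp [hw]

lemma ZX_anti (i : Fin n) : PauliZ n i * PauliX n i = -(PauliX n i * PauliZ n i) := by
  ext z w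
  simp only [PauliZ, Matrix.diagonal_mul, Matrix.mul_diagonal, PauliX, Matrix.of_apply,
    Matrix.neg_apply]
  by_cases hw : w = Function.update z i (!z i)
  · subst hw
    cases h : z i <;> simp [sgn, h]
  · simp [hw]

lemma mexp_def {ι : Type*} [Fintype ι] [DecidableEq ι] (A : Matrix ι ι ℂ) :
    mexp A = NormedSpace.exp A := rfl

lemma conj_aux {M : Type*} [Monoid M] (a c z b c' : M)
    (h1 : Commute c z) (h2 : Commute c b) (h3 : c * c' = 1) :
    (a * c) * z * (b * c') = a * z * b := by
  have hcb : c * (b * c') = b := by rw [← mul_assoc, h2.eq, mul_assoc, h3, mul_one]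
  calc (a * c) * z * (b * c') = a * (c * z) * (b * c') := by rw [mul_assoc a c z]
    _ = a * z * (c * (b * c')) := by
        rw [h1.eq, ← mul_assoc a z c, mul_assoc (a * z) c (b * c')]
    _ = a * z * b := by rw [hcb]

lemma conjZ (β : ℝ) (i : Fin n) :
    mexp ((Complex.I * β) • mixer n) * PauliZ n i * mexp ((-(Complex.I * β)) • mixer n)
      = mexp ((Complex.I * β) • PauliX n i) * PauliZ n i *
        mexp ((-(Complex.I * β)) • PauliX n i) := by
  classical
  set S : Mat n := ∑ k ∈ Finset.univ.erase i, PauliX n k with hS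
  have hmix : mixer n = PauliX n i + S := by
    rw [mixer]; exact (Finset.add_sum_erase _ _ (Finset.mem_univ i)).symm
  have hXS : Commute (PauliX n i) S :=
    Commute.sum_right _ _ _ fun k _ => X_comm i k
  have hZS : Commute (PauliZ n i) S :=
    Commute.sum_right _ _ _ fun k hk => ZX_comm (Finset.ne_of_mem_erase hk).symm
  have hU : mexp ((Complex.I * β) • mixer n)
      = mexp ((Complex.I * β) • PauliX n i) * mexp ((Complex.I * β) • S) := by
    simp only [mexp_def, hmix, smul_add]
    exact Matrix.exp_add_of_commute _ _ ((hXS.smul_left _).smul_right _)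
  have hV : mexp ((-(Complex.I * β)) • mixer n)
      = mexp ((-(Complex.I * β)) • PauliX n i) * mexp ((-(Complex.I * β)) • S) := by
    simp only [mexp_def, hmix, smul_add]
    exact Matrix.exp_add_of_commute _ _ ((hXS.smul_left _).smul_right _)
  rw [hU, hV]
  refine conj_aux _ _ _ _ _ ?_ ?_ ?_
  · exact (hZS.symm.smul_left _).exp_left
  · exact ((hXS.symm.smul_left _).smul_right _).exp
  · simpa [neg_smul] using mexp_mul_mexp_neg ((Complex.I * (β : ℂ)) • S)

lemma hVU (β : ℝ) :
    mexp ((-(Complex.I * β)) • mixer n) * mexp ((Complex.I * β) • mixer n) = 1 := by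
  simpa [neg_smul, neg_neg] using mexp_mul_mexp_neg ((-(Complex.I * (β : ℂ))) • mixer n)

lemma conj_mul {M : Type*} [Monoid M] (U V A B : M) (h : V * U = 1) :
    U * (A * B) * V = (U * A * V) * (U * B * V) := by
  have h2 : V * (U * (B * V)) = B * V := by rw [← mul_assoc, h, one_mul]
  simp only [mul_assoc, h2]

lemma ring_id (c u : ℂ) (X Z : Mat n) (hXX : X * X = 1) (hXZ : X * Z = -(Z * X)) :
    (c • 1 + u • X) * Z * (c • 1 + (-u) • X)
      = (c ^ 2 + u ^ 2) • Z + (-(2 * c * u)) • (Z * X) := by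
  have hZXX : Z * X * X = Z := by rw [mul_assoc, hXX, mul_one]
  simp only [add_mul, mul_add, smul_mul_assoc, mul_smul_comm, one_mul, mul_one, hXZ, hZXX,
    smul_neg, neg_smul, smul_smul, mul_neg, neg_mul, neg_neg]
  module

lemma hcu (β : ℝ) :
    Complex.cosh (Complex.I * β) ^ 2 + Complex.sinh (Complex.I * β) ^ 2
      = ((Real.cos (2 * β) : ℝ) : ℂ) := by
  rw [mul_comm Complex.I (β : ℂ), Complex.cosh_mul_I, Complex.sinh_mul_I, mul_pow, Complex.I_sq,
    Complex.ofReal_cos, Complex.ofReal_mul, Complex.ofReal_ofNat, Complex.cos_two_mul']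
  ring

lemma edge_entry (β : ℝ) {i j : Fin n} (h : i ≠ j) (w : Str n) :
    (mexp ((Complex.I * β) • mixer n) * (PauliZ n i * PauliZ n j) *
      mexp ((-(Complex.I * β)) • mixer n)) w w
      = (((Real.cos (2 * β)) ^ 2 : ℝ) : ℂ) * ((sgn (w i) : ℂ) * (sgn (w j) : ℂ)) := by
  have e1 : (PauliZ n i * PauliZ n j) w w = (sgn (w i) : ℂ) * sgn (w j) := by
    rw [PauliZ, PauliZ, Matrix.diagonal_mul_diagonal, Matrix.diagonal_apply_eq]
  have e2 : (PauliZ n i * (PauliZ n j * PauliX n j)) w w = 0 := by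
    rw [← mul_assoc, mulX_apply, PauliZ, PauliZ, Matrix.diagonal_mul_diagonal,
      Matrix.diagonal_apply_ne _ (flip_ne w j).symm]
  have e3 : ((PauliZ n i * PauliX n i) * PauliZ n j) w w = 0 := by
    rw [mul_assoc, ← (ZX_comm h.symm).eq, ← mul_assoc, mulX_apply, PauliZ, PauliZ,
      Matrix.diagonal_mul_diagonal, Matrix.diagonal_apply_ne _ (flip_ne w i).symm]
  have hne4 : w ≠ flip (flip w j) i := by
    intro hEq
    have hj := congrFun hEq j
    rw [flip_apply_ne h.symm] at hj
    simp [flip] at hj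
  have e4 : ((PauliZ n i * PauliX n i) * (PauliZ n j * PauliX n j)) w w = 0 := by
    have hx : PauliX n i * (PauliZ n j * PauliX n j)
        = PauliZ n j * (PauliX n i * PauliX n j) := by
      rw [← mul_assoc, ← (ZX_comm h.symm).eq, mul_assoc]
    have hrw : (PauliZ n i * PauliX n i) * (PauliZ n j * PauliX n j)
        = ((PauliZ n i * PauliZ n j) * PauliX n i) * PauliX n j := by
      conv_lhs => rw [mul_assoc, hx, ← mul_assoc, ← mul_assoc]
    rw [hrw, mulX_apply, mulX_apply, PauliZ, PauliZ, Matrix.diagonal_mul_diagonal,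
      Matrix.diagonal_apply_ne _ hne4]
  have hXZi : PauliX n i * PauliZ n i = -(PauliZ n i * PauliX n i) := by
    rw [ZX_anti i, neg_neg]
  have hXZj : PauliX n j * PauliZ n j = -(PauliZ n j * PauliX n j) := by
    rw [ZX_anti j, neg_neg]
  rw [conj_mul _ _ _ _ (hVU β), conjZ β i, conjZ β j,
    matExp_involution (Complex.I * β) (PauliX n i) (X_mul_X_self i),
    matExp_involution (-(Complex.I * β)) (PauliX n i) (X_mul_X_self i),
    matExp_involution (Complex.I * β) (PauliX n j) (X_mul_X_self j),
    matExp_involution (-(Complex.I * β)) (PauliX n j) (X_mul_X_self j),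
    Complex.cosh_neg, Complex.sinh_neg,
    ring_id _ _ _ _ (X_mul_X_self i) hXZi,
    ring_id _ _ _ _ (X_mul_X_self j) hXZj, hcu β]
  simp only [Matrix.add_mul, Matrix.mul_add, smul_mul_assoc, mul_smul_comm, smul_smul,
    Matrix.add_apply, Matrix.smul_apply, smul_eq_mul, e1, e2, e3, e4, mul_zero, add_zero]
  push_cast
  ring

end QaoaAux

theorem stmt9 (n : ℕ) (G : SimpleGraph (Fin n)) [DecidableRel G.Adj]
    (w : Str n) (β : ℝ) :
    (mexp ((Complex.I * β) • mixer n) * CZop n G *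
      mexp ((-(Complex.I * β)) • mixer n)) w w
      = ((Real.cos (2 * β)) ^ 2 * CZval n G w : ℝ) := by
  classical
  have key : ∀ e ∈ G.edgeFinset,
      (mexp ((Complex.I * β) • mixer n) * ZZedge n e *
        mexp ((-(Complex.I * β)) • mixer n)) w w
        = (((Real.cos (2 * β)) ^ 2 : ℝ) : ℂ)
          * ((Sym2.lift ⟨fun i j => sgn (w i) * sgn (w j), fun i j => by ring⟩ e : ℝ) : ℂ) := by
    intro e
    induction e using Sym2.ind with
    | _ i j =>
      intro he
      have hadj : G.Adj i j := by simpa using he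
      rw [show ZZedge n s(i, j) = PauliZ n i * PauliZ n j from Sym2.lift_mk _ _ _,
        Sym2.lift_mk, QaoaAux.edge_entry β hadj.ne w]
      push_cast
      ring
  rw [CZop, Matrix.mul_neg, Matrix.neg_mul, Finset.mul_sum, Finset.sum_mul]
  simp only [Matrix.neg_apply, Matrix.sum_apply]
  rw [Finset.sum_congr rfl key, CZval]
  push_cast
  rw [mul_neg, Finset.mul_sum]
end

section
/- Let G = (V,E) be a graph on vertex set {1,…,n}, let C_Z = −Σ_{⟨i,j⟩∈E} Z_i Z_j and B = Σ_{i=1}^n X_i on the n-qubit Hilbert space, and let w ∈ {−1,1}ⁿ be a string with C_Z(w) = −Σ_{⟨i,j⟩∈E} w_i w_j > 0. Then for every β ∈ ℝ, ⟨w| e^{iβB} C_Z e^{−iβB} |w⟩ ≤ C_Z(w); that is, the p = 1/2 warm-start QAOA cannot improve the cost of any good string. -/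
/-!
STATEMENT 10: The p = 1/2 warm-start QAOA cannot improve the cost of any good string:
if `C_Z(w) > 0` then `⟨w| e^{iβB} C_Z e^{−iβB} |w⟩ ≤ C_Z(w)` for every `β`.
-/

open scoped Matrix

namespace QAOAaux
variable {n : ℕ}

/-- bit flip -/
def flip (i : Fin n) (z : Str n) : Str n := Function.update z i (!z i)

lemma flip_flip (i : Fin n) : Function.Involutive (flip i) := by
  intro z; simp [flip, Function.update_idem]

lemma flip_apply_same (i : Fin n) (z : Str n) : flip i z i = !z i := by simp [flip]

lemma flip_apply_ne {i j : Fin n} (h : j ≠ i) (z : Str n) : flip i z j = z j := by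
  simp [flip, Function.update_of_ne h]

lemma flip_ne (i : Fin n) (z : Str n) : flip i z ≠ z := by
  intro h
  have := congrFun h i
  simp [flip] at this

lemma flip_comm {i j : Fin n} (h : i ≠ j) (z : Str n) :
    flip i (flip j z) = flip j (flip i z) := by
  funext k
  rcases eq_or_ne k i with rfl | hki
  · rw [flip_apply_same, flip_apply_ne h, flip_apply_ne h, flip_apply_same]
  · rcases eq_or_ne k j with rfl | hkj
    · rw [flip_apply_ne (Ne.symm h), flip_apply_same, flip_apply_same,
        flip_apply_ne (Ne.symm h)]
    · rw [flip_apply_ne hki, flip_apply_ne hkj, flip_apply_ne hkj, flip_apply_ne hki]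

lemma sgn_not (b : Bool) : sgn (!b) = -sgn b := by cases b <;> simp [sgn]

lemma pauliX_apply (i : Fin n) (z z' : Str n) :
    PauliX n i z z' = if z' = flip i z then 1 else 0 := rfl

lemma mul_pauliX_apply (M : Mat n) (i : Fin n) (z z' : Str n) :
    (M * PauliX n i) z z' = M z (flip i z') := by
  rw [Matrix.mul_apply]
  have key : ∀ y : Str n, (PauliX n i y z' : ℂ) = if y = flip i z' then 1 else 0 := by
    intro y
    rw [pauliX_apply]
    apply if_congr _ rfl rfl
    constructor
    · rintro rfl; rw [flip_flip]
    · rintro rfl; rw [flip_flip]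
  simp_rw [key, mul_ite, mul_one, mul_zero, Finset.sum_ite_eq', Finset.mem_univ, if_true]

lemma pauliX_mul_apply (M : Mat n) (i : Fin n) (z z' : Str n) :
    (PauliX n i * M) z z' = M (flip i z) z' := by
  rw [Matrix.mul_apply]
  simp_rw [pauliX_apply, ite_mul, one_mul, zero_mul, Finset.sum_ite_eq',
    Finset.mem_univ, if_true]

lemma pauliX_mul_self (i : Fin n) : PauliX n i * PauliX n i = 1 := by
  ext z z'
  rw [mul_pauliX_apply, pauliX_apply, Matrix.one_apply]
  exact if_congr ⟨fun h => ((flip_flip i).injective h).symm, fun h => by rw [h]⟩ rfl rfl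

lemma pauliX_comm (i j : Fin n) : Commute (PauliX n i) (PauliX n j) := by
  rcases eq_or_ne i j with rfl | hij
  · exact Commute.refl _
  · show _ = _
    ext z z'
    rw [mul_pauliX_apply, mul_pauliX_apply, pauliX_apply, pauliX_apply]
    apply if_congr _ rfl rfl
    constructor
    · intro h
      have h1 : flip i (flip j z') = z := by rw [h, flip_flip]
      rw [flip_comm hij] at h1
      have h2 := congrArg (flip j) h1
      rwa [flip_flip] at h2
    · intro h
      have h1 : flip j (flip i z') = z := by rw [h, flip_flip]
      rw [flip_comm (Ne.symm hij)] at h1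
      have h2 := congrArg (flip i) h1
      rwa [flip_flip] at h2

lemma pauliX_comm_pauliZ {i j : Fin n} (h : i ≠ j) :
    Commute (PauliX n i) (PauliZ n j) := by
  show _ = _
  ext z z'
  rw [PauliZ, Matrix.mul_diagonal, Matrix.diagonal_mul, pauliX_apply]
  by_cases hc : z' = flip i z
  · subst hc
    rw [if_pos rfl, flip_apply_ne (Ne.symm h), one_mul, mul_one]
  · rw [if_neg hc, zero_mul, mul_zero]

lemma pauliX_anticomm_pauliZ (i : Fin n) :
    PauliX n i * PauliZ n i = -(PauliZ n i * PauliX n i) := by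
  ext z z'
  rw [Matrix.neg_apply, PauliZ, Matrix.mul_diagonal, Matrix.diagonal_mul, pauliX_apply]
  by_cases hc : z' = flip i z
  · subst hc
    rw [if_pos rfl, flip_apply_same, one_mul, mul_one]
    push_cast [sgn_not]
    ring
  · rw [if_neg hc, zero_mul, mul_zero, neg_zero]

section ExpLemmas
variable {m : Type*} [Fintype m] [DecidableEq m]

/-- If `M * X = c • X` then `exp M * X = exp c • X`. -/
lemma exp_mul_eigen (M X : Matrix m m ℂ) (c : ℂ) (h : M * X = c • X) :
    NormedSpace.exp M * X = Complex.exp c • X := by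
  letI : SeminormedRing (Matrix m m ℂ) := Matrix.linftyOpSemiNormedRing
  letI : NormedRing (Matrix m m ℂ) := Matrix.linftyOpNormedRing
  letI : NormedAlgebra ℂ (Matrix m m ℂ) := Matrix.linftyOpNormedAlgebra
  have hpow : ∀ k : ℕ, M ^ k * X = c ^ k • X := by
    intro k
    induction k with
    | zero => simp
    | succ k ih =>
      rw [pow_succ, mul_assoc, h, mul_smul_comm, ih, smul_smul, pow_succ, mul_comm]
  rw [NormedSpace.exp_eq_tsum ℂ]; beta_reduce
  erw [← Summable.tsum_mul_right X (NormedSpace.expSeries_summable' (𝕂 := ℂ) M)]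
  have : ∀ k : ℕ, ((k.factorial : ℂ)⁻¹ • M ^ k) * X
      = ((k.factorial : ℂ)⁻¹ * c ^ k) • X := by
    intro k
    rw [smul_mul_assoc, hpow, smul_smul]
  erw [tsum_congr this]
  erw [Summable.tsum_smul_const]
  · congr 1
    rw [Complex.exp_eq_exp_ℂ, NormedSpace.exp_eq_tsum ℂ]
    exact tsum_congr fun k => by rw [smul_eq_mul]
  · have := NormedSpace.expSeries_summable' (𝕂 := ℂ) c
    simpa [smul_eq_mul] using this

/-- exp of a scalar multiple of an involution. -/
lemma exp_smul_involution (X : Matrix m m ℂ) (hX : X * X = 1) (c : ℂ) :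
    NormedSpace.exp (c • X) = Complex.cosh c • 1 + Complex.sinh c • X := by
  have hP : (c • X) * ((2⁻¹ : ℂ) • (1 + X)) = c • ((2⁻¹ : ℂ) • (1 + X)) := by
    rw [smul_mul_assoc, mul_smul_comm, mul_add, mul_one, hX, smul_smul, smul_smul]
    rw [add_comm X 1]
  have hQ : (c • X) * ((2⁻¹ : ℂ) • (1 - X)) = (-c) • ((2⁻¹ : ℂ) • (1 - X)) := by
    rw [smul_mul_assoc, mul_smul_comm, mul_sub, mul_one, hX, smul_smul, smul_smul]
    module
  have h1 := exp_mul_eigen (c • X) _ c hP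
  have h2 := exp_mul_eigen (c • X) _ (-c) hQ
  have hsplit : ((2⁻¹ : ℂ) • (1 + X)) + ((2⁻¹ : ℂ) • (1 - X)) = (1 : Matrix m m ℂ) := by
    module
  calc NormedSpace.exp (c • X)
      = NormedSpace.exp (c • X) * (((2⁻¹ : ℂ) • (1 + X)) + ((2⁻¹ : ℂ) • (1 - X))) := by
        rw [hsplit, mul_one]
    _ = Complex.exp c • ((2⁻¹ : ℂ) • (1 + X)) + Complex.exp (-c) • ((2⁻¹ : ℂ) • (1 - X)) := by
        rw [mul_add, h1, h2]
    _ = Complex.cosh c • 1 + Complex.sinh c • X := by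
        rw [Complex.cosh, Complex.sinh]
        module

lemma conj_single (X Z : Matrix m m ℂ) (hX : X * X = 1) (hXZ : X * Z = -(Z * X))
    (ch sh : ℂ) :
    (ch • 1 + sh • X) * Z * (ch • 1 - sh • X)
      = (ch ^ 2 + sh ^ 2) • Z + (-(2 * ch * sh)) • (Z * X) := by
  have h1 : (ch • 1 + sh • X) * Z = ch • Z + (-sh) • (Z * X) := by
    rw [add_mul, smul_mul_assoc, smul_mul_assoc, one_mul, hXZ, smul_neg, neg_smul]
  rw [h1, add_mul, mul_sub, mul_sub]
  rw [smul_mul_smul_comm, smul_mul_smul_comm, smul_mul_smul_comm, smul_mul_smul_comm]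
  rw [mul_assoc Z X X, hX]
  simp only [mul_one]
  module

end ExpLemmas

/-- The key conjugation computation for one edge. -/
lemma edge_entry (n : ℕ) {i j : Fin n} (hij : i ≠ j) (c : ℂ) (w : Str n) :
    (NormedSpace.exp (c • mixer n) * (PauliZ n i * PauliZ n j) *
      NormedSpace.exp (-(c • mixer n))) w w
      = (Complex.cosh c ^ 2 + Complex.sinh c ^ 2) ^ 2 * (sgn (w i) * sgn (w j)) := by
  classical
  set Xi := PauliX n i
  set Xj := PauliX n j
  set Zi := PauliZ n i
  set Zj := PauliZ n j
  set R : Mat n := ∑ k ∈ (Finset.univ.erase i).erase j, PauliX n k with hR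
  -- decomposition of the mixer
  have hjmem : j ∈ Finset.univ.erase i := Finset.mem_erase.mpr ⟨Ne.symm hij, Finset.mem_univ j⟩
  have hmix : mixer n = Xi + (Xj + R) := by
    rw [mixer, ← Finset.add_sum_erase _ _ (Finset.mem_univ i),
      ← Finset.add_sum_erase _ _ hjmem]
  -- commutation facts
  have hXR : ∀ k : Fin n, Commute (PauliX n k) R :=
    fun k => Commute.sum_right _ _ _ fun l _ => pauliX_comm k l
  have hRmem : ∀ k ∈ (Finset.univ.erase i).erase j, k ≠ i ∧ k ≠ j := by
    intro k hk
    rw [Finset.mem_erase, Finset.mem_erase] at hk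
    exact ⟨hk.2.1, hk.1⟩
  have hRZZ : Commute R (Zi * Zj) := by
    apply Commute.sum_left
    intro k hk
    obtain ⟨hki, hkj⟩ := hRmem k hk
    exact (pauliX_comm_pauliZ hki).mul_right (pauliX_comm_pauliZ hkj)
  -- exp factorizations
  have hsum1 : c • mixer n = c • Xi + (c • Xj + c • R) := by rw [hmix]; module
  have hsum2 : -(c • mixer n) = -(c • R) + (-(c • Xj) + -(c • Xi)) := by rw [hmix]; module
  have hcomm_i_jR : Commute (c • Xi) (c • Xj + c • R) :=
    (((pauliX_comm i j).smul_right c).add_right ((hXR i).smul_right c)).smul_left c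
  have hcomm_j_R : Commute (c • Xj) (c • R) := (((hXR j)).smul_right c).smul_left c
  have hE : NormedSpace.exp (c • mixer n)
      = NormedSpace.exp (c • Xi) * (NormedSpace.exp (c • Xj) * NormedSpace.exp (c • R)) := by
    rw [hsum1, Matrix.exp_add_of_commute _ _ hcomm_i_jR, Matrix.exp_add_of_commute _ _ hcomm_j_R]
  have hcomm_R_ji : Commute (-(c • R)) (-(c • Xj) + -(c • Xi)) :=
    (((((hXR j).symm.smul_right c).neg_right.add_right
      (((hXR i).symm.smul_right c).neg_right)).smul_left c)).neg_left
  have hcomm_j_i : Commute (-(c • Xj)) (-(c • Xi)) :=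
    ((((pauliX_comm j i).smul_right c).neg_right).smul_left c).neg_left
  have hE' : NormedSpace.exp (-(c • mixer n))
      = NormedSpace.exp (-(c • R)) *
        (NormedSpace.exp (-(c • Xj)) * NormedSpace.exp (-(c • Xi))) := by
    rw [hsum2, Matrix.exp_add_of_commute _ _ hcomm_R_ji, Matrix.exp_add_of_commute _ _ hcomm_j_i]
  set Ei := NormedSpace.exp (c • Xi)
  set Ej := NormedSpace.exp (c • Xj)
  set ER := NormedSpace.exp (c • R)
  set Ei' := NormedSpace.exp (-(c • Xi))
  set Ej' := NormedSpace.exp (-(c • Xj))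
  set ER' := NormedSpace.exp (-(c • R))
  have hERcancel : ER * ER' = 1 := by
    rw [show (1 : Mat n) = NormedSpace.exp (0 : Mat n) from (NormedSpace.exp_zero).symm,
      show (0 : Mat n) = c • R + -(c • R) by module,
      Matrix.exp_add_of_commute _ _ (Commute.refl (c • R)).neg_right]
  have hERZZ : ER * (Zi * Zj) = (Zi * Zj) * ER :=
    (Commute.exp_left (hRZZ.smul_left c))
  -- collapse the R part
  have hstep1 : NormedSpace.exp (c • mixer n) * (Zi * Zj) * NormedSpace.exp (-(c • mixer n))
      = Ei * (Ej * ((Zi * Zj) * (Ej' * Ei'))) := by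
    rw [hE, hE']
    calc Ei * (Ej * ER) * (Zi * Zj) * (ER' * (Ej' * Ei'))
        = Ei * (Ej * ((ER * (Zi * Zj) * ER') * (Ej' * Ei'))) := by
          simp only [mul_assoc]
      _ = Ei * (Ej * (((Zi * Zj) * (ER * ER')) * (Ej' * Ei'))) := by
          rw [hERZZ, mul_assoc (Zi * Zj)]
      _ = Ei * (Ej * ((Zi * Zj) * (Ej' * Ei'))) := by rw [hERcancel, mul_one]
  -- commute the j-part past Zi
  have hEjZi : Ej * Zi = Zi * Ej := Commute.exp_left ((pauliX_comm_pauliZ (Ne.symm hij)).smul_left c)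
  have hAj : Commute Ei' (Ej * Zj * Ej') := by
    have c1 : Commute Ei' Ej :=
      (((pauliX_comm i j).smul_right c).smul_left c).neg_left.exp
    have c2 : Commute Ei' Zj :=
      Commute.exp_left (((pauliX_comm_pauliZ hij).smul_left c).neg_left)
    have c3 : Commute Ei' Ej' :=
      ((((pauliX_comm i j).smul_right c).neg_right.smul_left c).neg_left).exp
    exact (c1.mul_right c2).mul_right c3
  have hstep2 : Ei * (Ej * ((Zi * Zj) * (Ej' * Ei')))
      = (Ei * Zi * Ei') * (Ej * Zj * Ej') := by
    calc Ei * (Ej * ((Zi * Zj) * (Ej' * Ei')))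
        = Ei * ((Ej * Zi) * (Zj * Ej' * Ei')) := by simp only [mul_assoc]
      _ = Ei * (Zi * (Ej * Zj * Ej' * Ei')) := by rw [hEjZi]; simp only [mul_assoc]
      _ = Ei * (Zi * (Ei' * (Ej * Zj * Ej'))) := by rw [← hAj.eq]
      _ = (Ei * Zi * Ei') * (Ej * Zj * Ej') := by simp only [mul_assoc]
  -- per-qubit conjugation
  set ch := Complex.cosh c
  set sh := Complex.sinh c
  set a : ℂ := ch ^ 2 + sh ^ 2
  set b : ℂ := -(2 * ch * sh)
  have hEconj : ∀ k : Fin n, NormedSpace.exp (c • PauliX n k) * PauliZ n k *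
      NormedSpace.exp (-(c • PauliX n k)) = a • PauliZ n k + b • (PauliZ n k * PauliX n k) := by
    intro k
    have h1 : NormedSpace.exp (c • PauliX n k) = ch • 1 + sh • PauliX n k :=
      exp_smul_involution _ (pauliX_mul_self k) c
    have h2 : NormedSpace.exp (-(c • PauliX n k)) = ch • 1 - sh • PauliX n k := by
      rw [← neg_smul, exp_smul_involution _ (pauliX_mul_self k) (-c), Complex.cosh_neg,
        Complex.sinh_neg, neg_smul, sub_eq_add_neg]
    rw [h1, h2]
    exact conj_single _ _ (pauliX_mul_self k) (pauliX_anticomm_pauliZ k) ch sh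
  have hAi : Ei * Zi * Ei' = a • Zi + b • (Zi * Xi) := hEconj i
  have hAjval : Ej * Zj * Ej' = a • Zj + b • (Zj * Xj) := hEconj j
  rw [hstep1, hstep2, hAi, hAjval]
  -- entry computation
  have e1 : (Zi * Zj) w w = (sgn (w i) : ℂ) * (sgn (w j) : ℂ) := by
    rw [show Zi = PauliZ n i from rfl, show Zj = PauliZ n j from rfl, PauliZ, PauliZ,
      Matrix.diagonal_mul_diagonal, Matrix.diagonal_apply_eq]
  have e2 : (Zi * (Zj * Xj)) w w = 0 := by
    rw [← mul_assoc, mul_pauliX_apply, show Zi = PauliZ n i from rfl,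
      show Zj = PauliZ n j from rfl, PauliZ, PauliZ, Matrix.diagonal_mul_diagonal,
      Matrix.diagonal_apply_ne _ (Ne.symm (flip_ne j w))]
  have e3 : ((Zi * Xi) * Zj) w w = 0 := by
    rw [show Zj = PauliZ n j from rfl, PauliZ, Matrix.mul_diagonal, mul_pauliX_apply,
      show Zi = PauliZ n i from rfl, PauliZ,
      Matrix.diagonal_apply_ne _ (Ne.symm (flip_ne i w)), zero_mul]
  have e4 : ((Zi * Xi) * (Zj * Xj)) w w = 0 := by
    have hflip : flip i (flip j w) ≠ w := by
      intro h
      have := congrFun h i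
      rw [flip_apply_same, flip_apply_ne hij] at this
      simp at this
    rw [show (Zi * Xi) * (Zj * Xj) = ((Zi * Xi) * Zj) * Xj by simp only [mul_assoc],
      mul_pauliX_apply, show Zj = PauliZ n j from rfl, PauliZ, Matrix.mul_diagonal,
      mul_pauliX_apply, show Zi = PauliZ n i from rfl, PauliZ,
      Matrix.diagonal_apply_ne _ (Ne.symm hflip), zero_mul]
  rw [add_mul, mul_add, mul_add, smul_mul_smul_comm, smul_mul_smul_comm,
    smul_mul_smul_comm, smul_mul_smul_comm]
  rw [show ((a * a) • (Zi * Zj) + (a * b) • (Zi * (Zj * Xj)) +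
      ((b * a) • ((Zi * Xi) * Zj) + (b * b) • ((Zi * Xi) * (Zj * Xj)))) w w
    = (a * a) * (Zi * Zj) w w + (a * b) * (Zi * (Zj * Xj)) w w +
      ((b * a) * ((Zi * Xi) * Zj) w w + (b * b) * ((Zi * Xi) * (Zj * Xj)) w w) by
      simp [Matrix.add_apply, Matrix.smul_apply, smul_eq_mul]]
  rw [e1, e2, e3, e4]
  ring

end QAOAaux

theorem stmt10 (n : ℕ) (G : SimpleGraph (Fin n)) [DecidableRel G.Adj]
    (w : Str n) (hw : 0 < CZval n G w) (β : ℝ) :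
    ((mexp ((Complex.I * β) • mixer n) * CZop n G *
      mexp ((-(Complex.I * β)) • mixer n)) w w).re ≤ CZval n G w := by
  classical
  set c : ℂ := Complex.I * β with hc
  set r : ℝ := Real.cos β ^ 2 - Real.sin β ^ 2 with hr
  have hA : (Complex.cosh c ^ 2 + Complex.sinh c ^ 2) ^ 2 = ((r ^ 2 : ℝ) : ℂ) := by
    rw [hc, mul_comm Complex.I (β : ℂ), Complex.cosh_mul_I, Complex.sinh_mul_I,
      mul_pow, Complex.I_sq]
    push_cast [hr]
    ring
  -- rewrite the per-edge terms
  have hterm : ∀ e ∈ G.edgeFinset,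
      (NormedSpace.exp (c • mixer n) * ZZedge n e * NormedSpace.exp (-(c • mixer n))) w w
        = ((r ^ 2 : ℝ) : ℂ) *
          ((Sym2.lift ⟨fun i j => sgn (w i) * sgn (w j), fun i j => by ring⟩ e : ℝ) : ℂ) := by
    intro e he
    induction e with
    | _ i j =>
      have hadj : G.Adj i j := by
        rwa [SimpleGraph.mem_edgeFinset, SimpleGraph.mem_edgeSet] at he
      have hij : i ≠ j := hadj.ne
      have := QAOAaux.edge_entry n hij c w
      rw [show ZZedge n s(i, j) = PauliZ n i * PauliZ n j from rfl, this, hA, Sym2.lift_mk]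
      push_cast
      ring
  -- assemble
  have hmain : ((mexp (c • mixer n) * CZop n G * mexp (-(c • mixer n))) w w)
      = ((r ^ 2 * CZval n G w : ℝ) : ℂ) := by
    rw [mexp, mexp, CZop, mul_neg, neg_mul, Matrix.neg_apply, Matrix.mul_sum,
      Matrix.sum_mul, Matrix.sum_apply]
    rw [Finset.sum_congr rfl hterm]
    rw [← Finset.mul_sum, CZval]
    push_cast
    ring
  have hgoal : ((mexp ((Complex.I * β) • mixer n) * CZop n G *
      mexp ((-(Complex.I * β)) • mixer n)) w w).re = r ^ 2 * CZval n G w := by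
    rw [show (-(Complex.I * (β : ℂ))) • mixer n = -(c • mixer n) by rw [hc, neg_smul]]
    rw [show ((Complex.I * (β : ℂ))) • mixer n = c • mixer n from rfl]
    rw [hmain, Complex.ofReal_re]
  rw [hgoal]
  have hr2 : r ^ 2 ≤ 1 := by
    rw [hr, ← Real.cos_two_mul']
    exact Real.cos_sq_le_one (2 * β)
  nlinarith [hw]
end

section
/- Let δ_1, …, δ_n be real numbers with |δ_i| ∈ {1, 3} for every i. Then there exist γ, β₁, β₂ ∈ ℝ such that 2(β₁+β₂)²·Σ_{i=1}^n δ_i − 8β₁β₂·Σ_{i=1}^n δ_i sin²(γδ_i) > 0 if and only if Σ_{i : |δ_i| = 1} δ_i > 0 or Σ_{i=1}^n δ_i³ > 0. (This quadratic form in (β₁,β₂) is the leading second-order term in the small-mixing-angle expansion of the p = 3/2 warm-start QAOA expected MaxCut cost on a 3-regular graph, where δ_i = (C_Z(flip_i(w)) − C_Z(w))/2.) -/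
/-!
STATEMENT 12: Necessary and sufficient condition for the leading second-order term of
the small-angle `p = 3/2` warm-start QAOA expansion to be improvable
(equation `eq:sam_iff` of the paper):
there exist `γ, β₁, β₂` with
`2(β₁+β₂)²·Σᵢ δᵢ − 8β₁β₂·Σᵢ δᵢ sin²(γδᵢ) > 0`
iff `Σ_{|δᵢ|=1} δᵢ > 0` or `Σᵢ δᵢ³ > 0`.
-/

private lemma forward_core (S₁ S₃ s t β₁ β₂ : ℝ) (hs0 : 0 ≤ s) (hs1 : s ≤ 1)
    (ht : t = s * (3 - 4 * s) ^ 2) (h1 : S₁ ≤ 0) (h9 : S₁ + 9 * S₃ ≤ 0) :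
    2 * (β₁ + β₂) ^ 2 * (S₁ + S₃) - 8 * β₁ * β₂ * (S₁ * s + S₃ * t) ≤ 0 := by
  have ht0 : 0 ≤ t := by rw [ht]; exact mul_nonneg hs0 (sq_nonneg _)
  have ht1 : t ≤ 1 := by
    nlinarith [mul_nonneg (by linarith : (0:ℝ) ≤ 1 - s) (sq_nonneg (4 * s - 1))]
  have ht9 : t ≤ 9 * s := by
    nlinarith [mul_nonneg (mul_nonneg hs0 hs0) (by linarith : (0:ℝ) ≤ 3 - 2 * s)]
  have ht8 : 9 * s - 8 ≤ t := by
    nlinarith [mul_nonneg (sq_nonneg (s - 1)) (by linarith : (0:ℝ) ≤ 2 * s + 1)]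
  have c1 : S₁ * s + S₃ * t ≤ 0 := by
    rcases le_or_gt S₃ 0 with h | h
    · nlinarith [mul_nonneg hs0 (neg_nonneg.mpr h1), mul_nonneg ht0 (neg_nonneg.mpr h)]
    · nlinarith [mul_nonneg hs0 (by linarith : (0:ℝ) ≤ -(S₁ + 9 * S₃)),
        mul_nonneg h.le (by linarith : (0:ℝ) ≤ 9 * s - t)]
  have c2 : S₁ * (1 - s) + S₃ * (1 - t) ≤ 0 := by
    rcases le_or_gt S₃ 0 with h | h
    · nlinarith [mul_nonneg (by linarith : (0:ℝ) ≤ 1 - s) (neg_nonneg.mpr h1),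
        mul_nonneg (by linarith : (0:ℝ) ≤ 1 - t) (neg_nonneg.mpr h)]
    · nlinarith [mul_nonneg (by linarith : (0:ℝ) ≤ 1 - s) (by linarith : (0:ℝ) ≤ -(S₁ + 9 * S₃)),
        mul_nonneg h.le (by linarith : (0:ℝ) ≤ t - (9 * s - 8))]
  nlinarith [mul_nonpos_of_nonneg_of_nonpos (sq_nonneg (β₁ + β₂)) c2,
    mul_nonpos_of_nonneg_of_nonpos (sq_nonneg (β₁ - β₂)) c1]

private lemma key_iff (S₁ S₃ : ℝ) :
    (∃ γ β₁ β₂ : ℝ,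
        0 < 2 * (β₁ + β₂) ^ 2 * (S₁ + S₃)
          - 8 * β₁ * β₂ * (S₁ * Real.sin γ ^ 2 + S₃ * Real.sin (3 * γ) ^ 2)) ↔
      0 < S₁ ∨ 0 < S₁ + 9 * S₃ := by
  constructor
  · rintro ⟨γ, β₁, β₂, hE⟩
    by_contra hcon
    push_neg at hcon
    obtain ⟨h1, h9⟩ := hcon
    have ht : Real.sin (3 * γ) ^ 2 = Real.sin γ ^ 2 * (3 - 4 * Real.sin γ ^ 2) ^ 2 := by
      rw [Real.sin_three_mul]; ring
    have := forward_core S₁ S₃ (Real.sin γ ^ 2) (Real.sin (3 * γ) ^ 2) β₁ β₂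
      (sq_nonneg _) (Real.sin_sq_le_one γ) ht h1 h9
    linarith
  · rintro (hS₁ | hK)
    · refine ⟨Real.pi / 3, 1, -1, ?_⟩
      have h3 : 3 * (Real.pi / 3) = Real.pi := by ring
      have hsq : Real.sin (Real.pi / 3) ^ 2 = 3 / 4 := by
        rw [Real.sin_pi_div_three, div_pow, Real.sq_sqrt (by norm_num : (0:ℝ) ≤ 3)]
        norm_num
      rw [h3, Real.sin_pi, hsq]
      nlinarith
    · rcases le_or_gt S₃ 0 with h | h
      · refine ⟨Real.pi / 2, 1, -1, ?_⟩
        have h3 : 3 * (Real.pi / 2) = Real.pi / 2 + Real.pi := by ring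
        rw [h3, Real.sin_add_pi, Real.sin_pi_div_two]
        nlinarith
      · set c : ℝ := (S₁ + 9 * S₃) / (48 * S₃) with hcdef
        have hc : 0 < c := div_pos hK (by linarith)
        set γ : ℝ := min (1 / 2) (Real.sqrt c) with hγdef
        have hγ0 : 0 < γ := lt_min (by norm_num) (Real.sqrt_pos.mpr hc)
        have hγhalf : γ ≤ 1 / 2 := min_le_left _ _
        have hγpi : γ < Real.pi := by linarith [Real.pi_gt_three]
        have hsin0 : 0 < Real.sin γ := Real.sin_pos_of_pos_of_lt_pi hγ0 hγpi
        have hsinle : Real.sin γ ≤ γ := Real.sin_le hγ0.le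
        have huc : Real.sin γ ^ 2 ≤ c := by
          have hg : γ ≤ Real.sqrt c := min_le_right _ _
          have h2 : γ ^ 2 ≤ Real.sqrt c ^ 2 := by nlinarith
          have h3 : Real.sqrt c ^ 2 = c := Real.sq_sqrt hc.le
          nlinarith
        refine ⟨γ, 1, -1, ?_⟩
        have ht : Real.sin (3 * γ) ^ 2 = Real.sin γ ^ 2 * (3 - 4 * Real.sin γ ^ 2) ^ 2 := by
          rw [Real.sin_three_mul]; ring
        rw [ht]
        set u := Real.sin γ ^ 2 with hudef
        have hu0 : 0 < u := pow_pos hsin0 2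
        have h48 : u * (48 * S₃) ≤ S₁ + 9 * S₃ := by
          have := (le_div_iff₀ (by linarith : (0:ℝ) < 48 * S₃)).mp huc
          linarith
        have hcore : 0 < S₁ + S₃ * (3 - 4 * u) ^ 2 := by
          nlinarith [mul_nonneg (sq_nonneg u) h.le]
        nlinarith [mul_pos hu0 hcore]

open Classical in
theorem stmt12 (n : ℕ) (δ : Fin n → ℝ) (hδ : ∀ i, |δ i| = 1 ∨ |δ i| = 3) :
    (∃ γ β₁ β₂ : ℝ,
        0 < 2 * (β₁ + β₂) ^ 2 * (∑ i, δ i)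
          - 8 * β₁ * β₂ * (∑ i, δ i * (Real.sin (γ * δ i)) ^ 2)) ↔
      (0 < ∑ i ∈ Finset.univ.filter (fun i => |δ i| = 1), δ i) ∨
        (0 < ∑ i, (δ i) ^ 3) := by
  classical
  set A := Finset.univ.filter (fun i => |δ i| = 1) with hA
  set B := Finset.univ.filter (fun i => ¬ |δ i| = 1) with hB
  have hmemA : ∀ i ∈ A, |δ i| = 1 := fun i hi => (Finset.mem_filter.mp hi).2
  have hmemB : ∀ i ∈ B, |δ i| = 3 := by
    intro i hi
    have := (Finset.mem_filter.mp hi).2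
    rcases hδ i with h | h
    · exact absurd h this
    · exact h
  set S₁ := ∑ i ∈ A, δ i with hS₁
  set S₃ := ∑ i ∈ B, δ i with hS₃
  have hsplit : ∀ f : Fin n → ℝ, ∑ i, f i = ∑ i ∈ A, f i + ∑ i ∈ B, f i := by
    intro f
    exact (Finset.sum_filter_add_sum_filter_not Finset.univ (fun i => |δ i| = 1) f).symm
  have hsum : ∑ i, δ i = S₁ + S₃ := hsplit δ
  have hcube : ∑ i, (δ i) ^ 3 = S₁ + 9 * S₃ := by
    rw [hsplit (fun i => δ i ^ 3)]
    have e1 : ∑ i ∈ A, δ i ^ 3 = S₁ := by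
      refine Finset.sum_congr rfl fun i hi => ?_
      have h := hmemA i hi
      have : δ i ^ 3 = δ i * |δ i| ^ 2 := by rw [sq_abs]; ring
      rw [this, h]; ring
    have e3 : ∑ i ∈ B, δ i ^ 3 = 9 * S₃ := by
      rw [hS₃, Finset.mul_sum]
      refine Finset.sum_congr rfl fun i hi => ?_
      have h := hmemB i hi
      have : δ i ^ 3 = δ i * |δ i| ^ 2 := by rw [sq_abs]; ring
      rw [this, h]; ring
    rw [e1, e3]
  have hsin : ∀ γ : ℝ, ∑ i, δ i * Real.sin (γ * δ i) ^ 2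
      = S₁ * Real.sin γ ^ 2 + S₃ * Real.sin (3 * γ) ^ 2 := by
    intro γ
    rw [hsplit (fun i => δ i * Real.sin (γ * δ i) ^ 2)]
    have e1 : ∑ i ∈ A, δ i * Real.sin (γ * δ i) ^ 2 = S₁ * Real.sin γ ^ 2 := by
      rw [hS₁, Finset.sum_mul]
      refine Finset.sum_congr rfl fun i hi => ?_
      rcases (abs_eq (by norm_num : (0:ℝ) ≤ 1)).mp (hmemA i hi) with h | h
      · rw [h, mul_one]
      · rw [h, show γ * (-1 : ℝ) = -γ by ring, Real.sin_neg]; ring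
    have e3 : ∑ i ∈ B, δ i * Real.sin (γ * δ i) ^ 2 = S₃ * Real.sin (3 * γ) ^ 2 := by
      rw [hS₃, Finset.sum_mul]
      refine Finset.sum_congr rfl fun i hi => ?_
      rcases (abs_eq (by norm_num : (0:ℝ) ≤ 3)).mp (hmemB i hi) with h | h
      · rw [h, show γ * (3 : ℝ) = 3 * γ by ring]
      · rw [h, show γ * (-3 : ℝ) = -(3 * γ) by ring, Real.sin_neg]; ring
    rw [e1, e3]
  have hiff : (∃ γ β₁ β₂ : ℝ,
        0 < 2 * (β₁ + β₂) ^ 2 * (∑ i, δ i)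
          - 8 * β₁ * β₂ * (∑ i, δ i * (Real.sin (γ * δ i)) ^ 2)) ↔
      (∃ γ β₁ β₂ : ℝ,
        0 < 2 * (β₁ + β₂) ^ 2 * (S₁ + S₃)
          - 8 * β₁ * β₂ * (S₁ * Real.sin γ ^ 2 + S₃ * Real.sin (3 * γ) ^ 2)) := by
    refine exists_congr fun γ => exists_congr fun β₁ => exists_congr fun β₂ => ?_
    rw [hsum, hsin γ]
  rw [hiff, key_iff S₁ S₃, hcube]
end

section
/- Let G = (V,E) be a finite simple graph and let b : V → {0,1} be any assignment. Define the Hamming weight W(b) = Σ_{i∈V} b_i and the number of violated edges K(b) = Σ_{⟨i,j⟩∈E} b_i b_j. Then G contains an independent set of size at least W(b) − K(b). Consequently, the maximum of W(b) − K(b) over all b equals the size of a maximum independent set of G. -/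
/-!
STATEMENT 16: Pruning a `{0,1}`-assignment `b` gives an independent set of size at
least `W(b) − K(b)`, and consequently the maximum of `W(b) − K(b)` over all `b` equals
the maximum size of an independent set.
-/

/-- `S` is an independent set of `G`: no edge of `G` joins two of its members. -/
def IsIndepSet {V : Type*} (G : SimpleGraph V) (S : Finset V) : Prop :=
  ∀ i ∈ S, ∀ j ∈ S, ¬ G.Adj i j

/-- The Hamming weight `W(b) = Σ_i b_i`. -/
def Wgt {V : Type*} [Fintype V] (b : V → ℤ) : ℤ := ∑ i, b i

/-- The number of violated edges `K(b) = Σ_{⟨i,j⟩∈E} b_i b_j`. -/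
def Kviol {V : Type*} [Fintype V] [DecidableEq V] (G : SimpleGraph V) [DecidableRel G.Adj]
    (b : V → ℤ) : ℤ :=
  ∑ e ∈ G.edgeFinset, Sym2.lift ⟨fun i j => b i * b j, fun i j => by ring⟩ e

lemma kviol_nonneg {V : Type*} [Fintype V] [DecidableEq V] (G : SimpleGraph V)
    [DecidableRel G.Adj] (b : V → ℤ) (hb : ∀ i, 0 ≤ b i) : 0 ≤ Kviol G b := by
  apply Finset.sum_nonneg
  intro e _
  induction e using Sym2.ind with
  | _ x y => simpa using mul_nonneg (hb x) (hb y)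

lemma aux_prune {V : Type*} [Fintype V] [DecidableEq V] (G : SimpleGraph V)
    [DecidableRel G.Adj] :
    ∀ n (b : V → ℤ), (∀ i, b i = 0 ∨ b i = 1) →
      (Finset.univ.filter (fun i => b i = 1)).card ≤ n →
      ∃ S : Finset V, IsIndepSet G S ∧ Wgt b - Kviol G b ≤ (S.card : ℤ) := by
  intro n
  induction n with
  | zero =>
    intro b hb hcard
    refine ⟨∅, by intro i hi; simp at hi, ?_⟩
    have hT : (Finset.univ.filter (fun i => b i = 1)) = ∅ :=
      Finset.card_eq_zero.mp (Nat.le_zero.mp hcard)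
    have hb0 : ∀ i, b i = 0 := by
      intro i
      rcases hb i with h | h
      · exact h
      · exfalso
        have : i ∈ (Finset.univ.filter (fun i => b i = 1)) := by simp [h]
        simp [hT] at this
    have : Wgt b = 0 := by simp [Wgt, hb0]
    have hk : 0 ≤ Kviol G b := kviol_nonneg G b (fun i => by simp [hb0 i])
    simp [this]
    linarith
  | succ m ih =>
    intro b hb hcard
    set T := Finset.univ.filter (fun i => b i = 1) with hT
    have hbnn : ∀ i, 0 ≤ b i := fun i => by rcases hb i with h | h <;> simp [h]
    by_cases hind : IsIndepSet G T
    · refine ⟨T, hind, ?_⟩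
      have hW : Wgt b = (T.card : ℤ) := by
        rw [Wgt, ← Finset.sum_filter_add_sum_filter_not Finset.univ (fun i => b i = 1)]
        have h1 : ∑ i ∈ T, b i = (T.card : ℤ) := by
          rw [Finset.sum_congr rfl (fun i hi => by
            simp only [hT, Finset.mem_filter] at hi; exact hi.2)]
          simp
        have h2 : ∑ i ∈ Finset.univ.filter (fun i => ¬ b i = 1), b i = 0 := by
          apply Finset.sum_eq_zero
          intro i hi
          simp only [Finset.mem_filter] at hi
          rcases hb i with h | h
          · exact h
          · exact absurd h hi.2
        rw [← hT] at *
        omega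
      have hk : 0 ≤ Kviol G b := kviol_nonneg G b hbnn
      omega
    · -- there is a violated edge
      simp only [IsIndepSet, not_forall] at hind
      obtain ⟨i, hi, j, hj, hadj⟩ := hind
      rw [not_not] at hadj
      have hbi : b i = 1 := by simp only [hT, Finset.mem_filter] at hi; exact hi.2
      have hbj : b j = 1 := by simp only [hT, Finset.mem_filter] at hj; exact hj.2
      have hij : i ≠ j := G.ne_of_adj hadj
      set b' := Function.update b i 0 with hb'def
      have hb' : ∀ k, b' k = 0 ∨ b' k = 1 := by
        intro k
        by_cases hk : k = i
        · left; simp [hb'def, hk]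
        · simpa [hb'def, Function.update_of_ne hk] using hb k
      have hb'nn : ∀ k, 0 ≤ b' k := fun k => by rcases hb' k with h | h <;> simp [h]
      have hsupp : (Finset.univ.filter (fun k => b' k = 1)) = T.erase i := by
        ext k
        by_cases hk : k = i
        · subst hk
          simp [hb'def]
        · simp [hb'def, Function.update_of_ne hk, hT, hk]
      have hcard' : (Finset.univ.filter (fun k => b' k = 1)).card ≤ m := by
        rw [hsupp]
        have := Finset.card_erase_of_mem hi
        omega
      obtain ⟨S, hS, hle⟩ := ih b' hb' hcard'
      refine ⟨S, hS, ?_⟩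
      -- Wgt b' = Wgt b - 1
      have hW : Wgt b' = Wgt b - 1 := by
        rw [Wgt, Wgt, ← Finset.add_sum_erase _ b (Finset.mem_univ i),
          ← Finset.add_sum_erase _ b' (Finset.mem_univ i)]
        have : ∑ k ∈ Finset.univ.erase i, b' k = ∑ k ∈ Finset.univ.erase i, b k := by
          apply Finset.sum_congr rfl
          intro k hk
          simp only [Finset.mem_erase] at hk
          simp [hb'def, Function.update_of_ne hk.1]
        rw [this]
        simp [hb'def, hbi]
      -- Kviol b' ≤ Kviol b - 1
      have hK : Kviol G b' ≤ Kviol G b - 1 := by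
        have hmem : s(i, j) ∈ G.edgeFinset := SimpleGraph.mem_edgeFinset.mpr hadj
        have hsum : (1 : ℤ) ≤ ∑ e ∈ G.edgeFinset,
            (Sym2.lift ⟨fun x y => b x * b y, fun x y => by ring⟩ e -
             Sym2.lift ⟨fun x y => b' x * b' y, fun x y => by ring⟩ e) := by
          have h1 : (Sym2.lift ⟨fun x y => b x * b y, fun x y => by ring⟩ s(i, j) -
              Sym2.lift ⟨fun x y => b' x * b' y, fun x y => by ring⟩ s(i, j)) = 1 := by
            simp [hbi, hbj, hb'def]
          rw [← h1]
          apply Finset.single_le_sum (f := fun e => Sym2.lift ⟨fun x y => b x * b y, fun x y => by ring⟩ e - Sym2.lift ⟨fun x y => b' x * b' y, fun x y => by ring⟩ e) ?_ hmem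
          intro e _
          induction e using Sym2.ind with
              | _ x y =>
                simp only [Sym2.lift_mk, sub_nonneg]
                have hx : b' x ≤ b x := by
                  by_cases h : x = i
                  · subst h; simp [hb'def, hbi]
                  · simp [hb'def, Function.update_of_ne h]
                have hy : b' y ≤ b y := by
                  by_cases h : y = i
                  · subst h; simp [hb'def, hbi]
                  · simp [hb'def, Function.update_of_ne h]
                exact mul_le_mul hx hy (hb'nn y) (hbnn x)
        rw [Finset.sum_sub_distrib] at hsum
        unfold Kviol
        omega
      omega

/-- indicator of a finset -/
lemma indicator_prop {V : Type*} [Fintype V] [DecidableEq V] (G : SimpleGraph V)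
    [DecidableRel G.Adj] (S : Finset V) (hS : IsIndepSet G S) :
    Wgt (fun i => if i ∈ S then (1 : ℤ) else 0) -
      Kviol G (fun i => if i ∈ S then (1 : ℤ) else 0) = (S.card : ℤ) := by
  have hW : Wgt (fun i => if i ∈ S then (1 : ℤ) else 0) = (S.card : ℤ) := by
    rw [Wgt, Finset.sum_ite_mem]
    simp
  have hK : Kviol G (fun i => if i ∈ S then (1 : ℤ) else 0) = 0 := by
    apply Finset.sum_eq_zero
    intro e he
    induction e using Sym2.ind with
    | _ x y =>
      have hadj : G.Adj x y := SimpleGraph.mem_edgeFinset.mp he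
      simp only [Sym2.lift_mk]
      by_cases hx : x ∈ S
      · by_cases hy : y ∈ S
        · exact absurd hadj (hS x hx y hy)
        · simp [hy]
      · simp [hx]
  rw [hW, hK]
  ring

theorem stmt16 {V : Type*} [Fintype V] [DecidableEq V]
    (G : SimpleGraph V) [DecidableRel G.Adj]
    (b : V → ℤ) (hb : ∀ i, b i = 0 ∨ b i = 1) :
    (∃ S : Finset V, IsIndepSet G S ∧ Wgt b - Kviol G b ≤ (S.card : ℤ)) ∧
      ∃ Mx : ℤ,
        IsGreatest {x : ℤ | ∃ b' : V → ℤ, (∀ i, b' i = 0 ∨ b' i = 1) ∧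
            x = Wgt b' - Kviol G b'} Mx ∧
        IsGreatest {x : ℤ | ∃ S : Finset V, IsIndepSet G S ∧ x = (S.card : ℤ)} Mx := by
  constructor
  · exact aux_prune G _ b hb le_rfl
  · classical
    -- find an independent set of maximum cardinality
    have hne : (Finset.univ.powerset.filter (fun S : Finset V => IsIndepSet G S)).Nonempty := by
      refine ⟨∅, ?_⟩
      simp only [Finset.mem_filter, Finset.mem_powerset]
      exact ⟨Finset.empty_subset _, fun i hi => by simp at hi⟩
    obtain ⟨S₀, hS₀mem, hS₀max⟩ := Finset.exists_max_image _ (fun S => S.card) hne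
    simp only [Finset.mem_filter, Finset.mem_powerset] at hS₀mem
    have hS₀ : IsIndepSet G S₀ := hS₀mem.2
    refine ⟨(S₀.card : ℤ), ⟨⟨?_, ?_⟩, ⟨?_, ?_⟩⟩⟩
    · -- membership in the W-K set
      refine ⟨fun i => if i ∈ S₀ then 1 else 0, fun i => by by_cases h : i ∈ S₀ <;> simp [h], ?_⟩
      rw [indicator_prop G S₀ hS₀]
    · -- upper bound for W-K set
      rintro x ⟨b', hb', rfl⟩
      obtain ⟨S, hSind, hSle⟩ := aux_prune G _ b' hb' le_rfl
      have : S.card ≤ S₀.card := by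
        apply hS₀max
        simp only [Finset.mem_filter, Finset.mem_powerset]
        exact ⟨Finset.subset_univ _, hSind⟩
      calc Wgt b' - Kviol G b' ≤ (S.card : ℤ) := hSle
        _ ≤ (S₀.card : ℤ) := by exact_mod_cast this
    · exact ⟨S₀, hS₀, rfl⟩
    · rintro x ⟨S, hSind, rfl⟩
      have : S.card ≤ S₀.card := by
        apply hS₀max
        simp only [Finset.mem_filter, Finset.mem_powerset]
        exact ⟨Finset.subset_univ _, hSind⟩
      exact_mod_cast this
end

section
/- Let n be an even positive integer and let y_1, …, y_n ∈ {−1, 1}. Then exp(i(π/8)(Σ_{i=1}^n y_i)²) = (e^{iπ/4}/√2)·(1 − i^{n+1}·y_1 y_2 ⋯ y_n), as an identity of complex numbers. (This identity underlies the 'magic angle' QAOA unitary for the Sherrington–Kirkpatrick model, which maps any computational basis state to a cat state of a string and its bitwise complement.) -/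
/-!
STATEMENT 19: The 'magic angle' cat-state identity for the Sherrington–Kirkpatrick
model: for even `n` and signs `y_i ∈ {−1,1}`,
`exp(i(π/8)(Σ y_i)²) = (e^{iπ/4}/√2)·(1 − i^{n+1}·y_1⋯y_n)`.
-/

open scoped Real

lemma aux19 {ι : Type*} [DecidableEq ι] (y : ι → ℝ) (s : Finset ι)
    (hy : ∀ i ∈ s, y i = 1 ∨ y i = -1) :
    ∃ k : ℕ, (∑ i ∈ s, (y i : ℂ)) = (s.card : ℂ) - 2 * k ∧
      (∏ i ∈ s, (y i : ℂ)) = (-1) ^ k := by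
  induction s using Finset.induction_on with
  | empty => exact ⟨0, by simp⟩
  | @insert a s ha ih =>
    obtain ⟨k, h1, h2⟩ := ih fun i hi => hy i (Finset.mem_insert_of_mem hi)
    rcases hy a (Finset.mem_insert_self a s) with h | h
    · refine ⟨k, ?_, ?_⟩
      · rw [Finset.sum_insert ha, h1, Finset.card_insert_of_notMem ha, h]
        push_cast; ring
      · rw [Finset.prod_insert ha, h2, h]; norm_num
    · refine ⟨k + 1, ?_, ?_⟩
      · rw [Finset.sum_insert ha, h1, Finset.card_insert_of_notMem ha, h]
        push_cast; ring
      · rw [Finset.prod_insert ha, h2, h, pow_succ]; norm_num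

theorem stmt19 (n : ℕ) (hn : Even n) (hpos : 0 < n)
    (y : Fin n → ℝ) (hy : ∀ i, y i = 1 ∨ y i = -1) :
    Complex.exp (Complex.I * (π / 8) * (∑ i, (y i : ℂ)) ^ 2)
      = (Complex.exp (Complex.I * (π / 4)) / (Real.sqrt 2 : ℂ)) *
        (1 - Complex.I ^ (n + 1) * ∏ i, (y i : ℂ)) := by
  obtain ⟨k, hsum, hprod⟩ := aux19 y Finset.univ (fun i _ => hy i)
  obtain ⟨m, hm⟩ := hn
  have hcard : (Finset.univ : Finset (Fin n)).card = n := by simp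
  set t : ℤ := (m : ℤ) - k with ht
  have hsum2 : (∑ i, (y i : ℂ)) = 2 * (t : ℂ) := by
    rw [hsum, hcard, hm, ht]; push_cast; ring
  have hexphalf : Complex.exp ((π/2 : ℝ) * Complex.I) = Complex.I := by
    rw [Complex.exp_mul_I]
    norm_num [← Complex.ofReal_cos, ← Complex.ofReal_sin, Real.cos_pi_div_two,
      Real.sin_pi_div_two]
  have hL : Complex.exp (Complex.I * (π/8) * (∑ i, (y i : ℂ)) ^ 2)
      = Complex.I ^ (t ^ 2) := by
    rw [hsum2]
    have h : Complex.I * (π/8 : ℝ) * (2 * (t:ℂ)) ^ 2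
        = ((t ^ 2 : ℤ) : ℂ) * ((π/2 : ℝ) * Complex.I) := by
      push_cast; ring
    rw [show Complex.I * (↑π/8) * (2 * (t:ℂ)) ^ 2
        = ((t ^ 2 : ℤ) : ℂ) * ((π/2 : ℝ) * Complex.I) by push_cast; ring,
      Complex.exp_int_mul, hexphalf]
  have hI : Complex.I ^ (n + 1) = (-1 : ℂ) ^ m * Complex.I := by
    rw [hm, show m + m + 1 = 2 * m + 1 by ring, pow_succ, pow_mul, Complex.I_sq]
  have hsign : ((-1 : ℂ)) ^ m * (-1 : ℂ) ^ k = (-1 : ℂ) ^ t := by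
    have h1 : ((-1 : ℂ)) ^ m * (-1 : ℂ) ^ k = (-1 : ℂ) ^ ((m : ℤ) + k) := by
      rw [zpow_add₀ (by norm_num : (-1:ℂ) ≠ 0)]
      simp [zpow_natCast]
    rw [h1, show (m : ℤ) + k = t + 2 * k by omega,
      zpow_add₀ (by norm_num : (-1:ℂ) ≠ 0), zpow_mul]
    norm_num
  have hexp4 : Complex.exp (Complex.I * ((π : ℂ)/4))
      = (Real.sqrt 2 / 2 : ℝ) * (1 + Complex.I) := by
    rw [show Complex.I * ((π : ℂ)/4) = ((π/4 : ℝ) : ℂ) * Complex.I by push_cast; ring,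
      Complex.exp_mul_I]
    rw [← Complex.ofReal_cos, ← Complex.ofReal_sin, Real.cos_pi_div_four,
      Real.sin_pi_div_four]
    push_cast; ring
  have hs2 : (Real.sqrt 2 : ℂ) * (Real.sqrt 2 : ℂ) = 2 := by
    rw [← Complex.ofReal_mul, Real.mul_self_sqrt (by norm_num : (0:ℝ) ≤ 2)]
    norm_num
  have hs0 : (Real.sqrt 2 : ℂ) ≠ 0 := by
    intro h
    rw [h] at hs2; norm_num at hs2
  rw [hL, hprod, hI, hexp4,
    show ((-1:ℂ)^m * Complex.I) * (-1:ℂ)^k = ((-1:ℂ)^m * (-1:ℂ)^k) * Complex.I by ring,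
    hsign]
  have hI4 : Complex.I ^ (4:ℤ) = 1 := by
    rw [show (4:ℤ) = ((4:ℕ):ℤ) from rfl, zpow_natCast]
    exact Complex.I_pow_four
  rcases Int.even_or_odd t with ⟨u, hu⟩ | ⟨u, hu⟩
  · have h1 : Complex.I ^ (t ^ 2) = 1 := by
      rw [show t ^ 2 = 4 * u ^ 2 by rw [hu]; ring, zpow_mul, hI4, one_zpow]
    have h2 : (-1 : ℂ) ^ t = 1 := by
      rw [show t = 2 * u by omega, zpow_mul]; norm_num
    rw [h1, h2]
    field_simp
    push_cast
    linear_combination ((Real.sqrt 2:ℂ)/2)*Complex.I_sq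
  · have h1 : Complex.I ^ (t ^ 2) = Complex.I := by
      rw [show t ^ 2 = 4 * (u ^ 2 + u) + 1 by rw [hu]; ring,
        zpow_add₀ Complex.I_ne_zero, zpow_mul, hI4, one_zpow, zpow_one, one_mul]
    have h2 : (-1 : ℂ) ^ t = -1 := by
      rw [hu, zpow_add₀ (by norm_num : (-1:ℂ) ≠ 0), zpow_mul]; norm_num
    rw [h1, h2]
    field_simp
    push_cast
    linear_combination -((Real.sqrt 2:ℂ)/2) * Complex.I_sq
end
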